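/- arXiv:1401.5234 — 6 statements merged into one kernel-verified Lean document; each statement's English description precedes it below -/
import Mathlib

section
/- Let q ≥ 3, m ≥ 3, and let S be a subset of 𝔽_q^m with #S = u·q^n < q^m, where q does not divide u and n ≥ 1. Suppose integers w < v < u are given such that for every affine hyperplane H of 𝔽_q^m, the cardinality #(S ∩ H) is either 0, or w·q^(n-1), or v·q^(n-1), or at least u·q^(n-1). Then there exists an affine hyperplane H with #(S ∩ H) equal to 0, w·q^(n-1), or v·q^(n-1). -/
open Matrix
lemma aux_ker_card {F : Type*} [Field F] [Fintype F] {m : ℕ} (v : Fin m → F) (hv : v ≠ 0) :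
    Nat.card {a : Fin m → F // a ⬝ᵥ v = 0} = Fintype.card F ^ (m - 1) := by
  classical
  set φ : (Fin m → F) →ₗ[F] F :=
    { toFun := fun a => a ⬝ᵥ v
      map_add' := fun a b => add_dotProduct a b v
      map_smul' := fun c a => smul_dotProduct c a v } with hφ
  have hsurj : Function.Surjective φ := by
    obtain ⟨i, hi⟩ : ∃ i, v i ≠ 0 := by
      by_contra h; push_neg at h; exact hv (funext h)
    intro c
    refine ⟨Pi.single i (c * (v i)⁻¹), ?_⟩
    show Pi.single i (c * (v i)⁻¹) ⬝ᵥ v = c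
    rw [single_dotProduct]
    field_simp
  have hker : Module.finrank F (LinearMap.ker φ) = m - 1 := by
    have h1 := LinearMap.finrank_range_add_finrank_ker φ
    rw [LinearMap.range_eq_top.2 hsurj, finrank_top, Module.finrank_self,
      Module.finrank_pi] at h1
    simp at h1
    omega
  have hcard : Fintype.card (LinearMap.ker φ) = Fintype.card F ^ (m - 1) := by
    rw [Module.card_eq_pow_finrank (K := F), hker]
  rw [Nat.card_eq_fintype_card, ← hcard]
  exact Fintype.card_congr (Equiv.subtypeEquivRight (fun a => by
    simp [LinearMap.mem_ker, hφ]))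

/-- An affine hyperplane of `𝔽_q^m`: a level set of a nonzero linear form. -/
def IsAffineHyperplane {F : Type*} [Field F] {m : ℕ} (H : Set (Fin m → F)) : Prop :=
  ∃ (ℓ : (Fin m → F) →ₗ[F] F) (c : F), ℓ ≠ 0 ∧ H = {x | ℓ x = c}

theorem stmt0 {F : Type*} [Field F] [Fintype F] (q : ℕ) (hq : Fintype.card F = q)
    (hq3 : 3 ≤ q) (m : ℕ) (hm : 3 ≤ m) (S : Set (Fin m → F))
    (u n w v : ℕ) (hn : 1 ≤ n) (hu : ¬ q ∣ u)
    (hcard : S.ncard = u * q ^ n) (hlt : u * q ^ n < q ^ m)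
    (hwv : w < v) (hvu : v < u)
    (hH : ∀ H : Set (Fin m → F), IsAffineHyperplane H →
      (S ∩ H).ncard = 0 ∨ (S ∩ H).ncard = w * q ^ (n - 1) ∨
      (S ∩ H).ncard = v * q ^ (n - 1) ∨ u * q ^ (n - 1) ≤ (S ∩ H).ncard) :
    ∃ H : Set (Fin m → F), IsAffineHyperplane H ∧
      ((S ∩ H).ncard = 0 ∨ (S ∩ H).ncard = w * q ^ (n - 1) ∨
       (S ∩ H).ncard = v * q ^ (n - 1)) := by
  classical
  by_contra hcon
  push_neg at hcon
  have hq0 : 0 < q := by omega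
  have hu0 : 0 < u := Nat.pos_of_ne_zero (fun h => hu (h ▸ dvd_zero q))
  have hcardF : Fintype.card (Fin m → F) = q ^ m := by
    rw [Fintype.card_fun, hq, Fintype.card_fin]
  -- find a point outside S
  obtain ⟨p, hp⟩ : ∃ p : Fin m → F, p ∉ S := by
    by_contra h
    push_neg at h
    have : S = Set.univ := Set.eq_univ_of_forall h
    rw [this, Set.ncard_univ, Nat.card_eq_fintype_card, hcardF] at hcard
    omega
  -- every hyperplane meets S in at least u * q^(n-1) points
  have hbig : ∀ H : Set (Fin m → F), IsAffineHyperplane H →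
      u * q ^ (n - 1) ≤ (S ∩ H).ncard := by
    intro H hyp
    rcases hH H hyp with h | h | h | h
    · exact absurd h (hcon H hyp).1
    · exact absurd h (hcon H hyp).2.1
    · exact absurd h (hcon H hyp).2.2
    · exact h
  -- finset versions
  set T : Finset (Fin m → F) := S.toFinset with hT
  have hTcard : T.card = u * q ^ n := by
    rw [hT, ← Set.ncard_eq_toFinset_card', hcard]
  set A : Finset (Fin m → F) := Finset.univ.filter (· ≠ 0) with hA
  have hAcard : A.card = q ^ m - 1 := by
    rw [hA, Finset.filter_ne', Finset.card_erase_of_mem (Finset.mem_univ 0),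
      Finset.card_univ, hcardF]
  -- double counting
  have hdc : ∑ a ∈ A, (T.filter fun x => a ⬝ᵥ x = a ⬝ᵥ p).card
      = ∑ x ∈ T, (A.filter fun a => a ⬝ᵥ x = a ⬝ᵥ p).card := by
    simp only [Finset.card_filter]
    exact Finset.sum_comm
  -- inner count
  have hinner : ∀ x ∈ T, (A.filter fun a => a ⬝ᵥ x = a ⬝ᵥ p).card = q ^ (m - 1) - 1 := by
    intro x hx
    have hxS : x ∈ S := by rwa [hT, Set.mem_toFinset] at hx
    have hxp : x - p ≠ 0 := sub_ne_zero.2 (fun h => hp (h ▸ hxS))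
    have heq : (A.filter fun a => a ⬝ᵥ x = a ⬝ᵥ p)
        = (Finset.univ.filter fun a : Fin m → F => a ⬝ᵥ (x - p) = 0).erase 0 := by
      ext a
      simp only [hA, Finset.mem_filter, Finset.mem_erase, Finset.mem_univ, true_and,
        dotProduct_sub, sub_eq_zero]
    rw [heq, Finset.card_erase_of_mem (by simp), ← hq]
    congr 1
    have := aux_ker_card (x - p) hxp
    rw [← this, Nat.card_eq_fintype_card, Fintype.card_subtype]
  have hRHS : ∑ x ∈ T, (A.filter fun a => a ⬝ᵥ x = a ⬝ᵥ p).card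
      = u * q ^ n * (q ^ (m - 1) - 1) := by
    rw [Finset.sum_congr rfl hinner, Finset.sum_const, smul_eq_mul, hTcard]
  -- each term on the left is at least u * q^(n-1)
  have hterm : ∀ a ∈ A, u * q ^ (n - 1) ≤ (T.filter fun x => a ⬝ᵥ x = a ⬝ᵥ p).card := by
    intro a ha
    have ha0 : a ≠ 0 := by rw [hA] at ha; simpa using (Finset.mem_filter.1 ha).2
    set ℓ : (Fin m → F) →ₗ[F] F :=
      { toFun := fun x => a ⬝ᵥ x
        map_add' := fun x y => dotProduct_add a x y
        map_smul' := fun c x => by simp [dotProduct_smul] } with hℓ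
    have hℓ0 : ℓ ≠ 0 := by
      obtain ⟨i, hi⟩ : ∃ i, a i ≠ 0 := by
        by_contra h; push_neg at h; exact ha0 (funext h)
      intro h
      have := congrFun (congrArg DFunLike.coe h) (Pi.single i 1)
      simp [hℓ, dotProduct_single] at this
      exact hi this
    have hhyp : IsAffineHyperplane {x : Fin m → F | a ⬝ᵥ x = a ⬝ᵥ p} :=
      ⟨ℓ, a ⬝ᵥ p, hℓ0, rfl⟩
    have hset : S ∩ {x : Fin m → F | a ⬝ᵥ x = a ⬝ᵥ p}
        = ↑(T.filter fun x => a ⬝ᵥ x = a ⬝ᵥ p) := by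
      ext x
      simp [hT, Set.mem_toFinset, and_comm]
    have := hbig _ hhyp
    rwa [hset, Set.ncard_coe_finset] at this
  have hLHS : A.card * (u * q ^ (n - 1)) ≤ ∑ a ∈ A, (T.filter fun x => a ⬝ᵥ x = a ⬝ᵥ p).card := by
    calc A.card * (u * q ^ (n - 1)) = A.card • (u * q ^ (n - 1)) := by rw [smul_eq_mul]
    _ ≤ _ := Finset.card_nsmul_le_sum A _ _ hterm
  -- final contradiction
  rw [hdc, hRHS, hAcard] at hLHS
  have hqm : q ^ m = q ^ (m - 1) * q := by
    rw [← pow_succ]; congr 1; omega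
  have hqn : q ^ n = q ^ (n - 1) * q := by
    rw [← pow_succ]; congr 1; omega
  have hQ1 : 1 ≤ q ^ (m - 1) := Nat.one_le_pow _ _ hq0
  have hr1 : 1 ≤ q ^ (n - 1) := Nat.one_le_pow _ _ hq0
  rw [hqm, hqn] at hLHS
  have h1 : 1 ≤ q ^ (m - 1) * q := Nat.one_le_iff_ne_zero.2 (by positivity)
  zify [hQ1, h1] at hLHS
  have hu' : (1 : ℤ) ≤ u := by exact_mod_cast hu0
  have hr' : (1 : ℤ) ≤ (q : ℤ) ^ (n - 1) := by exact_mod_cast hr1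
  have hQ' : (1 : ℤ) ≤ (q : ℤ) ^ (m - 1) := by exact_mod_cast hQ1
  have hq' : (3 : ℤ) ≤ q := by exact_mod_cast hq3
  nlinarith [mul_le_mul hu' hr' (by linarith) (by linarith : (0:ℤ) ≤ (u:ℤ))]
end

section
/- Let q ≥ 5 be a prime power, m ≥ 2, 1 ≤ a ≤ m−1. Define f : 𝔽_q^m → 𝔽_q by f(x) = ∏_{i=1}^{a−1}(1 − x_i^{q−1}) · ∏_{j=1}^{q−2}(x_a − b_j) · (x_{a+1} − u)(x_{a+1} − v), where b₁, …, b_{q−2} are distinct elements of 𝔽_q and u ≠ v in 𝔽_q. Then f has degree at most a(q−1)+1 and its Hamming weight |f| (number of points where f is nonzero) equals 2(q−2)·q^{m−a−1}, and moreover 2(q−2)·q^{m−a−1} > q^{m−a}. -/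
/-- The Hamming weight of a function: the number of points where it is nonzero. -/
noncomputable def hamWt {α F : Type*} [Zero F] (f : α → F) : ℕ := {x | f x ≠ 0}.ncard

open MvPolynomial in
private lemma td_sub_le {F : Type*} [Field F] {σ : Type*} (p r : MvPolynomial σ F) :
    (p - r).totalDegree ≤ max p.totalDegree r.totalDegree := by
  rw [sub_eq_add_neg]
  exact le_trans (totalDegree_add _ _) (by rw [totalDegree_neg])

open MvPolynomial in
private lemma td_X_sub_C_le {F : Type*} [Field F] {σ : Type*} (i : σ) (c : F) :
    ((X i - C c : MvPolynomial σ F)).totalDegree ≤ 1 := by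
  refine le_trans (td_sub_le _ _) ?_
  simp [totalDegree_X, totalDegree_C]

open MvPolynomial in
private lemma td_one_sub_X_pow_le {F : Type*} [Field F] {σ : Type*} (i : σ) (n : ℕ) :
    ((1 - X i ^ n : MvPolynomial σ F)).totalDegree ≤ n := by
  refine le_trans (td_sub_le _ _) ?_
  simp [totalDegree_X_pow]

theorem stmt3 {F : Type*} [Field F] [Fintype F] (q : ℕ) (hq : Fintype.card F = q)
    (hq5 : 5 ≤ q) (m a : ℕ) (hm : 2 ≤ m) (ha1 : 1 ≤ a) (ham : a ≤ m - 1)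
    (b : Fin (q - 2) → F) (hb : Function.Injective b)
    (u v : F) (huv : u ≠ v)
    (f : (Fin m → F) → F)
    (hf : ∀ x : Fin m → F,
      f x = (∏ i : Fin (a - 1), (1 - (x (Fin.castLE (by omega) i)) ^ (q - 1))) *
            (∏ j : Fin (q - 2), (x ⟨a - 1, by omega⟩ - b j)) *
            ((x ⟨a, by omega⟩ - u) * (x ⟨a, by omega⟩ - v))) :
    (∃ P : MvPolynomial (Fin m) F, P.totalDegree ≤ a * (q - 1) + 1 ∧
      ∀ x, MvPolynomial.eval x P = f x) ∧
    hamWt f = 2 * (q - 2) * q ^ (m - a - 1) ∧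
    q ^ (m - a) < 2 * (q - 2) * q ^ (m - a - 1) := by
  have ham' : a + 1 ≤ m := by omega
  have hkey : ∀ x : F, 1 - x ^ (q - 1) ≠ 0 ↔ x = 0 := by
    intro x
    constructor
    · intro h
      by_contra hx
      apply h
      have := FiniteField.pow_card_sub_one_eq_one x hx
      rw [hq] at this
      rw [this, sub_self]
    · rintro rfl
      rw [zero_pow (by omega), sub_zero]
      exact one_ne_zero
  refine ⟨?_, ?_, ?_⟩
  · -- the polynomial
    classical
    refine ⟨(∏ i : Fin (a - 1), (1 - (MvPolynomial.X (Fin.castLE (by omega) i)) ^ (q - 1))) *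
        (∏ j : Fin (q - 2), (MvPolynomial.X (⟨a - 1, by omega⟩ : Fin m) - MvPolynomial.C (b j))) *
        ((MvPolynomial.X (⟨a, by omega⟩ : Fin m) - MvPolynomial.C u) *
          (MvPolynomial.X (⟨a, by omega⟩ : Fin m) - MvPolynomial.C v)), ?_, ?_⟩
    · have h1 : (∏ i : Fin (a - 1),
          (1 - (MvPolynomial.X (Fin.castLE (show a - 1 ≤ m by omega) i) : MvPolynomial (Fin m) F) ^ (q - 1))).totalDegree
          ≤ (a - 1) * (q - 1) := by
        refine le_trans (MvPolynomial.totalDegree_finset_prod _ _) ?_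
        refine le_trans (Finset.sum_le_sum fun i _ => td_one_sub_X_pow_le _ (q - 1)) ?_
        simp [mul_comm]
      have h2 : (∏ j : Fin (q - 2),
          ((MvPolynomial.X (⟨a - 1, by omega⟩ : Fin m) : MvPolynomial (Fin m) F) - MvPolynomial.C (b j))).totalDegree ≤ q - 2 := by
        refine le_trans (MvPolynomial.totalDegree_finset_prod _ _) ?_
        refine le_trans (Finset.sum_le_sum fun j _ => td_X_sub_C_le _ (b j)) ?_
        simp
      have h3 : (((MvPolynomial.X (⟨a, by omega⟩ : Fin m) : MvPolynomial (Fin m) F) - MvPolynomial.C u) *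
          ((MvPolynomial.X (⟨a, by omega⟩ : Fin m) : MvPolynomial (Fin m) F) - MvPolynomial.C v)).totalDegree ≤ 2 := by
        refine le_trans (MvPolynomial.totalDegree_mul _ _) ?_
        have := td_X_sub_C_le (⟨a, by omega⟩ : Fin m) u
        have := td_X_sub_C_le (⟨a, by omega⟩ : Fin m) v
        omega
      refine le_trans (MvPolynomial.totalDegree_mul _ _) ?_
      refine le_trans (add_le_add (le_trans (MvPolynomial.totalDegree_mul _ _) (add_le_add h1 h2)) h3) ?_
      have key : a * (q - 1) = (a - 1) * (q - 1) + (q - 1) := by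
        cases a with
        | zero => omega
        | succ n => simp [Nat.succ_sub_one, Nat.succ_mul]
      omega
    · intro x
      rw [hf x]
      simp
  · -- the weight
    classical
    set T : Fin m → Finset F := fun i =>
      if (i : ℕ) < a - 1 then {0}
      else if (i : ℕ) = a - 1 then (Finset.univ.image b)ᶜ
      else if (i : ℕ) = a then ({u, v} : Finset F)ᶜ
      else Finset.univ with hT
    have hsetf : {x : Fin m → F | f x ≠ 0} = ↑(Fintype.piFinset T) := by
      ext x
      simp only [Set.mem_setOf_eq, Finset.mem_coe, Fintype.mem_piFinset, hf x]
      rw [mul_ne_zero_iff, mul_ne_zero_iff, mul_ne_zero_iff,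
        Finset.prod_ne_zero_iff, Finset.prod_ne_zero_iff]
      constructor
      · rintro ⟨⟨h1, h2⟩, h3, h4⟩ i
        simp only [hT]
        split_ifs with c1 c2 c3
        · have h := (hkey _).mp (h1 ⟨(i : ℕ), c1⟩ (Finset.mem_univ _))
          have hcast : Fin.castLE (show a - 1 ≤ m by omega) (⟨(i : ℕ), c1⟩ : Fin (a - 1)) = i := by
            ext; rfl
          rw [hcast] at h
          simpa using h
        · have hi : i = (⟨a - 1, by omega⟩ : Fin m) := by ext; simpa using c2
          simp only [Finset.mem_compl, Finset.mem_image, not_exists]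
          rintro j ⟨_, hj⟩
          exact h2 j (Finset.mem_univ _) (by rw [hi] at hj; rw [hj, sub_self])
        · have hi : i = (⟨a, by omega⟩ : Fin m) := by ext; simpa using c3
          simp only [Finset.mem_compl, Finset.mem_insert, Finset.mem_singleton, not_or]
          constructor
          · intro h; rw [hi] at h; exact h3 (by rw [h, sub_self])
          · intro h; rw [hi] at h; exact h4 (by rw [h, sub_self])
        · exact Finset.mem_univ _
      · intro h
        refine ⟨⟨?_, ?_⟩, ?_, ?_⟩
        · intro j _
          rw [hkey]
          have := h (Fin.castLE (show a - 1 ≤ m by omega) j)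
          have hc : ((Fin.castLE (show a - 1 ≤ m by omega) j : Fin m) : ℕ) < a - 1 := j.isLt
          simp only [hT] at this
          rw [if_pos hc] at this
          simpa using this
        · intro j _
          have := h (⟨a - 1, by omega⟩ : Fin m)
          simp only [hT] at this
          rw [if_neg (by simp), if_pos (by simp)] at this
          simp only [Finset.mem_compl, Finset.mem_image, not_exists] at this
          intro hzero
          exact this j ⟨Finset.mem_univ _, (sub_eq_zero.mp hzero).symm⟩
        · have := h (⟨a, by omega⟩ : Fin m)
          simp only [hT] at this
          rw [if_neg (by omega), if_neg (by omega), if_pos (by trivial)] at this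
          simp only [Finset.mem_compl, Finset.mem_insert, Finset.mem_singleton, not_or] at this
          intro hzero
          exact this.1 (sub_eq_zero.mp hzero)
        · have := h (⟨a, by omega⟩ : Fin m)
          simp only [hT] at this
          rw [if_neg (by omega), if_neg (by omega), if_pos (by trivial)] at this
          simp only [Finset.mem_compl, Finset.mem_insert, Finset.mem_singleton, not_or] at this
          intro hzero
          exact this.2 (sub_eq_zero.mp hzero)
    rw [hamWt, hsetf, Set.ncard_coe_finset, Fintype.card_piFinset]
    -- card computations
    have cb : (Finset.univ.image b).card = q - 2 := by
      rw [Finset.card_image_of_injective _ hb, Finset.card_univ, Fintype.card_fin]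
    have ccb : ((Finset.univ.image b)ᶜ).card = 2 := by
      rw [Finset.card_compl, cb, hq]
      omega
    have cuv : (({u, v} : Finset F)ᶜ).card = q - 2 := by
      rw [Finset.card_compl, Finset.card_insert_of_notMem (by simpa using huv),
        Finset.card_singleton, hq]
    set c : ℕ → ℕ := fun n =>
      if n < a - 1 then 1
      else if n = a - 1 then 2
      else if n = a then q - 2
      else q with hc
    have hTc : ∀ i : Fin m, (T i).card = c (i : ℕ) := by
      intro i
      simp only [hT, hc]
      split_ifs
      · simp
      · exact ccb
      · exact cuv
      · rw [Finset.card_univ, hq]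
    calc ∏ i : Fin m, (T i).card = ∏ i : Fin m, c (i : ℕ) :=
          Finset.prod_congr rfl fun i _ => hTc i
      _ = ∏ i ∈ Finset.range m, c i := Fin.prod_univ_eq_prod_range _ _
      _ = 2 * (q - 2) * q ^ (m - a - 1) := by
          have hm2 : m = (a - 1 + 1 + 1) + (m - a - 1) := by omega
          conv_lhs => rw [hm2]
          rw [Finset.prod_range_add, Finset.prod_range_succ, Finset.prod_range_succ]
          have e0 : ∏ i ∈ Finset.range (a - 1), c i = 1 :=
            Finset.prod_eq_one fun i hi => if_pos (Finset.mem_range.mp hi)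
          have e1 : c (a - 1) = 2 := by
            simp only [hc]
            split_ifs <;> omega
          have e2 : c (a - 1 + 1) = q - 2 := by
            simp only [hc]
            split_ifs <;> omega
          have e3 : ∏ i ∈ Finset.range (m - a - 1), c (a - 1 + 1 + 1 + i) = q ^ (m - a - 1) := by
            rw [Finset.prod_congr rfl fun i _ => ?_, Finset.prod_const, Finset.card_range]
            simp only [hc]
            split_ifs <;> omega
          rw [e0, e1, e2, e3]
          ring
  · -- the inequality
    have h1 : m - a = (m - a - 1) + 1 := by omega
    rw [h1, pow_succ]
    have hp : 0 < q ^ (m - a - 1) := Nat.pow_pos (by omega)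
    calc q ^ (m - a - 1) * q < q ^ (m - a - 1) * (2 * (q - 2)) :=
          mul_lt_mul_of_pos_left (by omega) hp
      _ = 2 * (q - 2) * q ^ (m - a - 1) := by ring
end

section
/- Let q ≥ 5 be a prime power, m ≥ 2, 0 ≤ a ≤ m−2, and 4 ≤ b ≤ ⌊q/2⌋+2. Define f : 𝔽_q^m → 𝔽_q by f(x) = ∏_{i=1}^{a}(1 − x_i^{q−1}) · ∏_{j=1}^{b−2}(x_{a+1} − b_j) · (x_{a+2} − u)(x_{a+2} − v), where b₁, …, b_{b−2} are distinct in 𝔽_q and u ≠ v. Then deg(f) ≤ a(q−1)+b, |f| = (q−2)(q−b+2)·q^{m−a−2}, and (q−2)(q−b+2)·q^{m−a−2} > (q−b+1)(q−1)·q^{m−a−2}. -/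
theorem stmt4 {F : Type*} [Field F] [Fintype F] (q : ℕ) (hq : Fintype.card F = q)
    (hq5 : 5 ≤ q) (m a b : ℕ) (hm : 2 ≤ m) (ha : a ≤ m - 2)
    (hb4 : 4 ≤ b) (hb : 2 * b ≤ q + 4)
    (B : Fin (b - 2) → F) (hB : Function.Injective B)
    (u v : F) (huv : u ≠ v)
    (f : (Fin m → F) → F)
    (hf : ∀ x : Fin m → F,
      f x = (∏ i : Fin a, (1 - (x (Fin.castLE (by omega) i)) ^ (q - 1))) *
            (∏ j : Fin (b - 2), (x ⟨a, by omega⟩ - B j)) *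
            ((x ⟨a + 1, by omega⟩ - u) * (x ⟨a + 1, by omega⟩ - v))) :
    (∃ P : MvPolynomial (Fin m) F, P.totalDegree ≤ a * (q - 1) + b ∧
      ∀ x, MvPolynomial.eval x P = f x) ∧
    hamWt f = (q - 2) * (q - b + 2) * q ^ (m - a - 2) ∧
    (q - b + 1) * (q - 1) * q ^ (m - a - 2) < (q - 2) * (q - b + 2) * q ^ (m - a - 2) := by
  have ham : a ≤ m := by omega
  have hbq : b ≤ q := by omega
  refine ⟨?_, ?_, ?_⟩
  · -- polynomial part
    refine ⟨(∏ i : Fin a, (1 - (MvPolynomial.X (Fin.castLE ham i)) ^ (q - 1))) *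
            (∏ j : Fin (b - 2), (MvPolynomial.X (⟨a, by omega⟩ : Fin m) - MvPolynomial.C (B j))) *
            ((MvPolynomial.X (⟨a + 1, by omega⟩ : Fin m) - MvPolynomial.C u) *
             (MvPolynomial.X (⟨a + 1, by omega⟩ : Fin m) - MvPolynomial.C v)), ?_, ?_⟩
    · have h1 : (∏ i : Fin a, (1 - (MvPolynomial.X (σ := Fin m) (R := F) (Fin.castLE ham i)) ^ (q - 1))).totalDegree ≤ a * (q - 1) := by
        refine (MvPolynomial.totalDegree_finset_prod _ _).trans ?_
        calc ∑ i : Fin a, (1 - (MvPolynomial.X (σ := Fin m) (R := F) (Fin.castLE ham i)) ^ (q - 1)).totalDegree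
            ≤ ∑ _i : Fin a, (q - 1) := by
              refine Finset.sum_le_sum fun i _ => ?_
              refine (MvPolynomial.totalDegree_sub _ _).trans ?_
              simp [MvPolynomial.totalDegree_one, MvPolynomial.totalDegree_X_pow]
          _ = a * (q - 1) := by simp [Finset.sum_const, mul_comm]
      have hXC : ∀ (i : Fin m) (c : F),
          (MvPolynomial.X i - MvPolynomial.C c).totalDegree ≤ 1 := by
        intro i c
        refine (MvPolynomial.totalDegree_sub _ _).trans ?_
        simp [MvPolynomial.totalDegree_X, MvPolynomial.totalDegree_C]
      have h2 : (∏ j : Fin (b - 2), (MvPolynomial.X (⟨a, by omega⟩ : Fin m) - MvPolynomial.C (B j))).totalDegree ≤ b - 2 := by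
        refine (MvPolynomial.totalDegree_finset_prod _ _).trans ?_
        have hsum : ∑ j : Fin (b - 2),
            (MvPolynomial.X (⟨a, by omega⟩ : Fin m) - MvPolynomial.C (B j)).totalDegree
            ≤ ∑ _j : Fin (b - 2), 1 :=
          Finset.sum_le_sum
            (f := fun j : Fin (b - 2) =>
              (MvPolynomial.X (⟨a, by omega⟩ : Fin m) - MvPolynomial.C (B j)).totalDegree)
            (g := fun _ => 1) (fun j _ => hXC _ _)
        simpa using hsum
      refine (MvPolynomial.totalDegree_mul _ _).trans ?_
      have h3 := (MvPolynomial.totalDegree_mul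
        (MvPolynomial.X (⟨a + 1, by omega⟩ : Fin m) - MvPolynomial.C u)
        (MvPolynomial.X (⟨a + 1, by omega⟩ : Fin m) - MvPolynomial.C v)).trans
        (add_le_add (hXC _ u) (hXC _ v))
      have h12 := (MvPolynomial.totalDegree_mul
        (∏ i : Fin a, (1 - (MvPolynomial.X (σ := Fin m) (R := F) (Fin.castLE ham i)) ^ (q - 1)))
        (∏ j : Fin (b - 2), (MvPolynomial.X (⟨a, by omega⟩ : Fin m) - MvPolynomial.C (B j)))).trans
        (add_le_add h1 h2)
      omega
    · intro x
      rw [hf x]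
      simp
  · -- weight part
    -- characterize the support
    have key : ∀ x : Fin m → F, f x ≠ 0 ↔
        ((∀ i : Fin a, x (Fin.castLE ham i) = 0) ∧
         (∀ j : Fin (b - 2), x ⟨a, by omega⟩ ≠ B j) ∧
         x ⟨a + 1, by omega⟩ ≠ u ∧ x ⟨a + 1, by omega⟩ ≠ v) := by
      intro x
      have hfac : ∀ y : F, 1 - y ^ (q - 1) ≠ 0 ↔ y = 0 := by
        intro y
        constructor
        · intro h
          by_contra hy
          rw [← hq, FiniteField.pow_card_sub_one_eq_one y hy, sub_self] at h
          exact h rfl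
        · intro h
          rw [h, zero_pow (by omega), sub_zero]
          exact one_ne_zero
      rw [hf x, mul_ne_zero_iff, mul_ne_zero_iff, mul_ne_zero_iff,
        Finset.prod_ne_zero_iff, Finset.prod_ne_zero_iff]
      constructor
      · rintro ⟨⟨hp1, hp2⟩, hp3, hp4⟩
        refine ⟨fun i => (hfac _).1 (hp1 i (Finset.mem_univ i)),
          fun j => sub_ne_zero.1 (hp2 j (Finset.mem_univ j)),
          sub_ne_zero.1 hp3, sub_ne_zero.1 hp4⟩
      · rintro ⟨h1, h2, h3, h4⟩
        exact ⟨⟨fun i _ => (hfac _).2 (h1 i), fun j _ => sub_ne_zero.2 (h2 j)⟩,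
          sub_ne_zero.2 h3, sub_ne_zero.2 h4⟩
    classical
    set S : Fin m → Finset F := fun i =>
      if i.val < a then {0}
      else if i.val = a then Finset.univ \ Finset.image B Finset.univ
      else if i.val = a + 1 then Finset.univ \ {u, v}
      else Finset.univ with hS
    have hset : {x : Fin m → F | f x ≠ 0} = ↑(Fintype.piFinset S) := by
      ext x
      simp only [Set.mem_setOf_eq, Finset.coe_sort_coe, Finset.mem_coe,
        Fintype.mem_piFinset, key x]
      constructor
      · rintro ⟨h1, h2, h3, h4⟩ i
        rcases lt_trichotomy i.val a with h | h | h
        · have : i = Fin.castLE ham ⟨i.val, h⟩ := by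
            apply Fin.ext; rfl
          simp only [hS]
          simp only [if_pos h, Finset.mem_singleton]
          rw [this]; exact h1 _
        · have hi : i = (⟨a, by omega⟩ : Fin m) := by apply Fin.ext; exact h
          simp only [hS]
          simp only [if_neg (by omega : ¬ i.val < a), if_pos h]
          rw [Finset.mem_sdiff]
          refine ⟨Finset.mem_univ _, ?_⟩
          rw [Finset.mem_image]
          rintro ⟨j, -, hj⟩
          rw [hi] at hj
          exact h2 j hj.symm
        · rcases Nat.lt_or_ge (a + 1) i.val with h' | h'
          · simp only [hS]
            simp only [if_neg (by omega : ¬ i.val < a), if_neg (by omega : ¬ i.val = a),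
              if_neg (by omega : ¬ i.val = a + 1)]
            exact Finset.mem_univ _
          · have hval : i.val = a + 1 := by omega
            have hi : i = (⟨a + 1, by omega⟩ : Fin m) := by apply Fin.ext; exact hval
            simp only [hS]
            rw [if_neg (by omega : ¬ i.val < a), if_neg (by omega : ¬ i.val = a),
              if_pos hval, Finset.mem_sdiff, Finset.mem_insert, Finset.mem_singleton, hi]
            exact ⟨Finset.mem_univ _, fun hc => hc.elim h3 h4⟩
      · intro h
        refine ⟨fun i => ?_, fun j => ?_, ?_, ?_⟩
        · have := h (Fin.castLE ham i)
          simp only [hS] at this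
          simp only [Fin.coe_castLE, i.isLt, if_pos, Finset.mem_singleton] at this
          exact this
        · have := h (⟨a, by omega⟩ : Fin m)
          simp only [hS] at this
          rw [if_neg (lt_irrefl a)] at this
          intro hcon
          exact (Finset.mem_sdiff.mp this).2
            (Finset.mem_image.2 ⟨j, Finset.mem_univ j, hcon.symm⟩)
        · have := h (⟨a + 1, by omega⟩ : Fin m)
          simp only [hS] at this
          rw [if_neg (by omega : ¬ a + 1 < a), if_neg (by omega : ¬ a + 1 = a)] at this
          exact fun hc =>
            (Finset.mem_sdiff.mp this).2 (Finset.mem_insert.mpr (Or.inl hc))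
        · have := h (⟨a + 1, by omega⟩ : Fin m)
          simp only [hS] at this
          rw [if_neg (by omega : ¬ a + 1 < a), if_neg (by omega : ¬ a + 1 = a)] at this
          exact fun hc => (Finset.mem_sdiff.mp this).2
            (Finset.mem_insert.mpr (Or.inr (Finset.mem_singleton.mpr hc)))
    set g : ℕ → ℕ := fun n => if n < a then 1 else if n = a then q - b + 2
      else if n = a + 1 then q - 2 else q with hg
    have hcard : ∀ i : Fin m, (S i).card = g i.val := by
      intro i
      simp only [hS, hg]
      have himg : (Finset.image B Finset.univ).card = b - 2 := by
        rw [Finset.card_image_of_injective _ hB, Finset.card_univ, Fintype.card_fin]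
      have hcuv : ({u, v} : Finset F).card = 2 := by
        rw [Finset.card_insert_of_notMem (by simpa using huv), Finset.card_singleton]
      split_ifs with h1 h2 h3
      · simp
      · rw [Finset.card_sdiff_of_subset (Finset.subset_univ _), himg, Finset.card_univ, hq]
        omega
      · rw [Finset.card_sdiff_of_subset (Finset.subset_univ _), hcuv, Finset.card_univ, hq]
      · rw [Finset.card_univ, hq]
    rw [hamWt, hset, Set.ncard_coe_finset, Fintype.card_piFinset]
    calc ∏ i : Fin m, (S i).card
        = ∏ i : Fin m, g i.val := Finset.prod_congr rfl fun i _ => hcard i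
      _ = ∏ n ∈ Finset.range m, g n := Fin.prod_univ_eq_prod_range g m
      _ = (q - 2) * (q - b + 2) * q ^ (m - a - 2) := by
          rw [← Finset.prod_range_mul_prod_Ico g (show a + 2 ≤ m by omega)]
          rw [Finset.prod_range_succ, Finset.prod_range_succ]
          have e1 : (∏ n ∈ Finset.range a, g n) = 1 := by
            apply Finset.prod_eq_one
            intro n hn
            have hn' := Finset.mem_range.1 hn
            simp only [hg]
            split_ifs <;> omega
          have e2 : (∏ n ∈ Finset.Ico (a + 2) m, g n) = q ^ (m - a - 2) := by
            have hgq : ∀ n ∈ Finset.Ico (a + 2) m, g n = q := by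
              intro n hn
              have hn' := Finset.mem_Ico.1 hn
              simp only [hg]
              split_ifs <;> omega
            rw [Finset.prod_congr rfl hgq, Finset.prod_const, Nat.card_Ico]
            congr 1 <;> omega
          have ga : g a = q - b + 2 := by
            simp only [hg]; split_ifs <;> omega
          have ga1 : g (a + 1) = q - 2 := by
            simp only [hg]; split_ifs <;> omega
          rw [e1, e2, ga, ga1]
          ring
  · -- inequality part
    have hpow : 0 < q ^ (m - a - 2) := Nat.pow_pos (by omega)
    have hlt : (q - b + 1) * (q - 1) < (q - 2) * (q - b + 2) := by
      obtain ⟨k, hk⟩ : ∃ k, q = k + b := ⟨q - b, by omega⟩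
      obtain ⟨c, hc⟩ : ∃ c, b = c + 2 ∧ 2 ≤ c := ⟨b - 2, by omega, by omega⟩
      obtain ⟨hc1, hc2⟩ := hc
      subst hc1
      subst hk
      have e1 : k + (c + 2) - (c + 2) + 1 = k + 1 := by omega
      have e2 : k + (c + 2) - 1 = k + c + 1 := by omega
      have e3 : k + (c + 2) - 2 = k + c := by omega
      have e4 : k + (c + 2) - (c + 2) + 2 = k + 2 := by omega
      rw [e1, e2, e3, e4]
      nlinarith
    exact Nat.mul_lt_mul_of_lt_of_le hlt (le_refl _) hpow
end

section
/- Let q ≥ 4 be a prime power. Let a₁x+b₁y, a₂x+b₂y, a₃x+b₃y+c be three affine forms on 𝔽_q² with (a_i,b_i) ≠ (0,0), pairwise non-proportional linear parts (a_i b_j − a_j b_i ≠ 0 for i ≠ j), and c ≠ 0. Then the function f(x,y) = (a₁x+b₁y)(a₂x+b₂y)(a₃x+b₃y+c) has Hamming weight exactly q² − 3q + 3. -/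
open Finset

private lemma line_card {F : Type*} [Field F] [Fintype F] [DecidableEq F]
    (a b d : F) (h : a ≠ 0 ∨ b ≠ 0) :
    (Finset.univ.filter (fun p : F × F => a * p.1 + b * p.2 = d)).card = Fintype.card F := by
  rw [← Finset.card_univ (α := F)]
  rcases h with ha | hb
  · apply Finset.card_bij' (fun p _ => p.2) (fun y _ => ((d - b * y) / a, y))
    · intro p hp; exact Finset.mem_univ _
    · intro y hy
      simp only [Finset.mem_filter, Finset.mem_univ, true_and]
      field_simp
      ring
    · intro p hp
      simp only [Finset.mem_filter, Finset.mem_univ, true_and] at hp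
      ext <;> simp
      rw [div_eq_iff ha]
      linear_combination -hp
    · intro y hy; rfl
  · apply Finset.card_bij' (fun p _ => p.1) (fun x _ => (x, (d - a * x) / b))
    · intro p hp; exact Finset.mem_univ _
    · intro x hx
      simp only [Finset.mem_filter, Finset.mem_univ, true_and]
      field_simp
      ring
    · intro p hp
      simp only [Finset.mem_filter, Finset.mem_univ, true_and] at hp
      ext <;> simp
      rw [div_eq_iff hb]
      linear_combination -hp
    · intro x hx; rfl

private lemma inter_single {F : Type*} [Field F] [Fintype F] [DecidableEq F]
    (a1 b1 d1 a2 b2 d2 : F) (hdet : a1 * b2 - a2 * b1 ≠ 0) :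
    Finset.univ.filter (fun p : F × F => a1 * p.1 + b1 * p.2 = d1 ∧ a2 * p.1 + b2 * p.2 = d2)
      = {((d1 * b2 - d2 * b1) / (a1 * b2 - a2 * b1),
          (a1 * d2 - a2 * d1) / (a1 * b2 - a2 * b1))} := by
  ext ⟨x, y⟩
  simp only [Finset.mem_filter, Finset.mem_univ, true_and, Finset.mem_singleton, Prod.mk.injEq]
  constructor
  · rintro ⟨h1, h2⟩
    constructor
    · rw [eq_div_iff hdet]; linear_combination b2 * h1 - b1 * h2
    · rw [eq_div_iff hdet]; linear_combination a1 * h2 - a2 * h1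
  · rintro ⟨hx, hy⟩
    subst hx hy
    constructor <;> (rw [mul_div_assoc', mul_div_assoc', ← add_div, div_eq_iff hdet]; ring)

theorem stmt8 {F : Type*} [Field F] [Fintype F] (q : ℕ) (hq : Fintype.card F = q)
    (hq4 : 4 ≤ q) (a b : Fin 3 → F) (c : F) (hc : c ≠ 0)
    (hab : ∀ i, (a i, b i) ≠ (0, 0))
    (hnp : ∀ i j, i ≠ j → a i * b j - a j * b i ≠ 0)
    (f : F × F → F)
    (hf : ∀ p : F × F, f p =
      (a 0 * p.1 + b 0 * p.2) * (a 1 * p.1 + b 1 * p.2) * (a 2 * p.1 + b 2 * p.2 + c)) :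
    hamWt f = q ^ 2 - 3 * q + 3 := by
  classical
  have habne : ∀ i, a i ≠ 0 ∨ b i ≠ 0 := by
    intro i
    by_contra h
    push_neg at h
    exact hab i (by rw [h.1, h.2])
  set L0 := Finset.univ.filter (fun p : F × F => a 0 * p.1 + b 0 * p.2 = 0) with hL0
  set L1 := Finset.univ.filter (fun p : F × F => a 1 * p.1 + b 1 * p.2 = 0) with hL1
  set L2 := Finset.univ.filter (fun p : F × F => a 2 * p.1 + b 2 * p.2 = -c) with hL2
  have c0 : L0.card = q := by rw [hL0, line_card _ _ _ (habne 0), hq]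
  have c1 : L1.card = q := by rw [hL1, line_card _ _ _ (habne 1), hq]
  have c2 : L2.card = q := by rw [hL2, line_card _ _ _ (habne 2), hq]
  -- pairwise intersections
  have i01 : L0 ∩ L1 = {((0 : F), (0 : F))} := by
    rw [hL0, hL1, ← Finset.filter_and, inter_single _ _ _ _ _ _ (hnp 0 1 (by decide))]
    simp
  have i02 : ∃ u : F × F, L0 ∩ L2 = {u} := by
    rw [hL0, hL2, ← Finset.filter_and]
    exact ⟨_, inter_single _ _ _ _ _ _ (hnp 0 2 (by decide))⟩
  have i12 : ∃ v : F × F, L1 ∩ L2 = {v} := by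
    rw [hL1, hL2, ← Finset.filter_and]
    exact ⟨_, inter_single _ _ _ _ _ _ (hnp 1 2 (by decide))⟩
  obtain ⟨u, hu⟩ := i02
  obtain ⟨v, hv⟩ := i12
  have huL0 : u ∈ L0 ∧ u ∈ L2 := by
    have : u ∈ L0 ∩ L2 := by rw [hu]; exact Finset.mem_singleton_self u
    exact ⟨Finset.mem_of_mem_inter_left this, Finset.mem_of_mem_inter_right this⟩
  have hvL1 : v ∈ L1 ∧ v ∈ L2 := by
    have : v ∈ L1 ∩ L2 := by rw [hv]; exact Finset.mem_singleton_self v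
    exact ⟨Finset.mem_of_mem_inter_left this, Finset.mem_of_mem_inter_right this⟩
  have origin_not_L2 : ((0 : F), (0 : F)) ∉ L2 := by
    rw [hL2]
    simp only [Finset.mem_filter, Finset.mem_univ, true_and, mul_zero, add_zero]
    intro h
    exact hc (neg_eq_zero.mp h.symm)
  have huv : u ≠ v := by
    intro h
    have : u ∈ L0 ∩ L1 := Finset.mem_inter.2 ⟨huL0.1, h ▸ hvL1.1⟩
    rw [i01, Finset.mem_singleton] at this
    exact origin_not_L2 (this ▸ huL0.2)
  -- union cards
  have cu01 : (L0 ∪ L1).card = 2 * q - 1 := by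
    have := Finset.card_union_add_card_inter L0 L1
    rw [i01, c0, c1, Finset.card_singleton] at this
    omega
  have hinter2 : (L0 ∪ L1) ∩ L2 = {u, v} := by
    rw [Finset.union_inter_distrib_right, hu, hv]
    rfl
  have cinter2 : ((L0 ∪ L1) ∩ L2).card = 2 := by
    rw [hinter2, Finset.card_insert_of_notMem (by simpa using huv), Finset.card_singleton]
  have cZ : ((L0 ∪ L1) ∪ L2).card = 3 * q - 3 := by
    have := Finset.card_union_add_card_inter (L0 ∪ L1) L2
    rw [cinter2, cu01, c2] at this
    omega
  -- zero set of f
  have hZ : Finset.univ.filter (fun p : F × F => f p = 0) = (L0 ∪ L1) ∪ L2 := by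
    ext p
    simp only [Finset.mem_filter, Finset.mem_univ, true_and, Finset.mem_union, hf p,
      mul_eq_zero, hL0, hL1, hL2, add_eq_zero_iff_eq_neg]
  -- count nonzeros
  have hset : {p : F × F | f p ≠ 0} = ↑(Finset.univ.filter (fun p : F × F => f p ≠ 0)) := by
    ext p; simp
  have hcardFF : Fintype.card (F × F) = q ^ 2 := by
    rw [Fintype.card_prod, hq, sq]
  have hsplit : (Finset.univ.filter (fun p : F × F => f p ≠ 0)).card
      = q ^ 2 - (3 * q - 3) := by
    have hnot : Finset.univ.filter (fun p : F × F => f p ≠ 0)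
        = Finset.univ \ Finset.univ.filter (fun p : F × F => f p = 0) := by
      rw [← Finset.filter_not]
    rw [hnot, Finset.card_sdiff_of_subset (Finset.filter_subset _ _), hZ, cZ, Finset.card_univ, hcardFF]
  have hq2 : 4 * q ≤ q ^ 2 := by
    rw [sq]
    exact Nat.mul_le_mul_right q hq4
  rw [hamWt, hset, Set.ncard_coe_finset, hsplit]
  omega
end

section
/- Let q ≥ 13 be a prime power. The third weight of R_q(5,2) equals (q−3)(q−2). -/
set_option maxHeartbeats 1000000
open Finset Polynomial

namespace S14
noncomputable section
open scoped Classical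
variable {F : Type*} [Field F] [Fintype F]

def lineF (p d : F × F) : Finset (F × F) := univ.image (fun t : F => p + t • d)

lemma mem_lineF {p d x : F × F} : x ∈ lineF p d ↔ ∃ t : F, x = p + t • d := by
  simp [lineF, eq_comm]

lemma self_mem_lineF (p d : F × F) : p ∈ lineF p d :=
  mem_lineF.2 ⟨0, by simp⟩

lemma card_lineF (p : F × F) {d : F × F} (hd : d ≠ 0) :
    (lineF p d).card = Fintype.card F := by
  rw [lineF, card_image_of_injective _ ?_, card_univ]
  intro s t hst
  have h1 : s * d.1 = t * d.1 ∧ s * d.2 = t * d.2 := by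
    constructor <;> · have := congrArg (Prod.fst) hst <;> have := congrArg (Prod.snd) hst <;>
      simp_all [Prod.ext_iff, Prod.smul_def, smul_eq_mul]
  rcases Prod.mk.injEq .. ▸ (by exact fun h => hd (Prod.ext h.1 h.2) : ¬(d.1 = 0 ∧ d.2 = 0)) with h
  by_cases hd1 : d.1 = 0
  · have hd2 : d.2 ≠ 0 := fun h2 => hd (Prod.ext hd1 h2)
    exact mul_right_cancel₀ hd2 h1.2
  · exact mul_right_cancel₀ hd1 h1.1

lemma lineF_repoint {p d u : F × F} (hu : u ∈ lineF p d) : lineF u d = lineF p d := by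
  obtain ⟨s, rfl⟩ := mem_lineF.1 hu
  ext x
  simp only [mem_lineF]
  constructor
  · rintro ⟨t, rfl⟩; exact ⟨s + t, by rw [add_smul]; abel⟩
  · rintro ⟨t, rfl⟩; exact ⟨t - s, by rw [sub_smul]; abel⟩

lemma lineF_redir (p : F × F) {d : F × F} {s : F} (hs : s ≠ 0) :
    lineF p (s • d) = lineF p d := by
  ext x
  simp only [mem_lineF]
  constructor
  · rintro ⟨t, rfl⟩; exact ⟨t * s, by rw [smul_smul]⟩
  · rintro ⟨t, rfl⟩; exact ⟨t / s, by rw [smul_smul, div_mul_cancel₀ _ hs]⟩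

lemma lineF_two_points {p d x y : F × F} (hd : d ≠ 0) (hx : x ∈ lineF p d)
    (hy : y ∈ lineF p d) (hxy : x ≠ y) : lineF p d = lineF x (y - x) := by
  rw [← lineF_repoint hx]
  obtain ⟨s, rfl⟩ := mem_lineF.1 hx
  obtain ⟨t, rfl⟩ := mem_lineF.1 hy
  have h : (p + t • d) - (p + s • d) = (t - s) • d := by rw [sub_smul]; abel
  rw [h, lineF_redir]
  intro h0
  apply hxy
  rw [sub_eq_zero] at h0
  rw [h0]

lemma card_inter_le_one {p d p' d' : F × F} (hd : d ≠ 0) (hd' : d' ≠ 0)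
    (hne : lineF p d ≠ lineF p' d') : ((lineF p d) ∩ (lineF p' d')).card ≤ 1 := by
  rw [card_le_one]
  intro x hx y hy
  by_contra hxy
  apply hne
  rw [lineF_two_points hd (mem_inter.1 hx).1 (mem_inter.1 hy).1 hxy,
    lineF_two_points hd' (mem_inter.1 hx).2 (mem_inter.1 hy).2 hxy]

def crossP (d e : F × F) : F := d.1 * e.2 - d.2 * e.1

lemma cross_symm_zero {d e : F × F} (h : crossP d e = 0) : crossP e d = 0 := by
  unfold crossP at *; linear_combination -h

lemma cross_trans {d1 d2 d3 : F × F} (h2 : d2 ≠ 0) (h12 : crossP d1 d2 = 0)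
    (h23 : crossP d2 d3 = 0) : crossP d1 d3 = 0 := by
  unfold crossP at *
  by_cases ha : d2.1 = 0
  · have hb : d2.2 ≠ 0 := fun h => h2 (Prod.ext ha h)
    rw [ha] at h12 h23
    have h1 : d1.1 = 0 := by
      rcases mul_eq_zero.1 (show d1.1 * d2.2 = 0 by linear_combination h12) with h | h
      · exact h
      · exact absurd h hb
    have h3 : d3.1 = 0 := by
      rcases mul_eq_zero.1 (show d2.2 * d3.1 = 0 by linear_combination -h23) with h | h
      · exact absurd h hb
      · exact h
    rw [h1, h3]; ring
  · apply mul_left_cancel₀ ha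
    rw [mul_zero]
    linear_combination d1.1 * h23 + d3.1 * h12

lemma redir_of_cross_zero {d d' : F × F} (hd : d ≠ 0) (hd' : d' ≠ 0)
    (h : crossP d d' = 0) : ∃ s : F, s ≠ 0 ∧ d' = s • d := by
  unfold crossP at h
  by_cases ha : d.1 = 0
  · have hb : d.2 ≠ 0 := fun hh => hd (Prod.ext ha hh)
    have h1 : d'.1 = 0 := by
      rcases mul_eq_zero.1 (show d.2 * d'.1 = 0 by linear_combination -h + d'.2 * ha) with h | h
      · exact absurd h hb
      · exact h
    refine ⟨d'.2 / d.2, ?_, ?_⟩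
    · intro hh
      exact hd' (Prod.ext h1 (by field_simp at hh; simpa using hh))
    · refine Prod.ext (by simp [ha, h1]) ?_
      simp [Prod.smul_def, smul_eq_mul]
      field_simp
  · refine ⟨d'.1 / d.1, ?_, ?_⟩
    · intro hh
      have h1 : d'.1 = 0 := by field_simp at hh; simpa using hh
      have h2 : d'.2 = 0 := by
        rcases mul_eq_zero.1 (show d.1 * d'.2 = 0 by linear_combination h + d.2 * h1) with hx | hx
        · exact absurd hx ha
        · exact hx
      exact hd' (Prod.ext h1 h2)
    · refine Prod.ext (by simp only [Prod.smul_def, smul_eq_mul]; field_simp) ?_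
      simp only [Prod.smul_def, smul_eq_mul]
      field_simp
      linear_combination h

lemma lines_eq_of_par_of_common {p d p' d' : F × F} (hd : d ≠ 0) (hd' : d' ≠ 0)
    (h : crossP d d' = 0) {u : F × F} (hu : u ∈ lineF p d) (hu' : u ∈ lineF p' d') :
    lineF p d = lineF p' d' := by
  obtain ⟨s, hs, rfl⟩ := redir_of_cross_zero hd hd' h
  rw [← lineF_repoint hu, ← lineF_repoint hu', lineF_redir _ hs]

lemma par_disjoint {p d p' d' : F × F} (hd : d ≠ 0) (hd' : d' ≠ 0)
    (h : crossP d d' = 0) (hne : lineF p d ≠ lineF p' d') :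
    lineF p d ∩ lineF p' d' = ∅ := by
  rw [eq_empty_iff_forall_notMem]
  intro u hu
  exact hne (lines_eq_of_par_of_common hd hd' h (mem_inter.1 hu).1 (mem_inter.1 hu).2)

lemma nonpar_meet {p d p' d' : F × F} (h : crossP d d' ≠ 0) :
    (lineF p d ∩ lineF p' d').Nonempty := by
  unfold crossP at h
  set t : F := ((p'.1 - p.1) * d'.2 - d'.1 * (p'.2 - p.2)) / (d.1 * d'.2 - d.2 * d'.1) with ht
  set t' : F := ((p'.1 - p.1) * d.2 - d.1 * (p'.2 - p.2)) / (d.1 * d'.2 - d.2 * d'.1) with ht'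
  refine ⟨p + t • d, mem_inter.2 ⟨mem_lineF.2 ⟨t, rfl⟩, mem_lineF.2 ⟨t', ?_⟩⟩⟩
  have hinv : (d.1 * d'.2 - d.2 * d'.1) * (d.1 * d'.2 - d.2 * d'.1)⁻¹ = 1 := mul_inv_cancel₀ h
  refine Prod.ext ?_ ?_ <;> simp only [Prod.smul_def, smul_eq_mul, Prod.fst_add, Prod.snd_add, ht, ht']
  · linear_combination (p'.1 - p.1) * hinv
  · linear_combination (p'.2 - p.2) * hinv

lemma card_inter_nonpar {p d p' d' : F × F} (hd : d ≠ 0) (hd' : d' ≠ 0)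
    (h : crossP d d' ≠ 0) (hne : lineF p d ≠ lineF p' d') :
    (lineF p d ∩ lineF p' d').card = 1 := by
  have h1 := card_inter_le_one hd hd' hne
  have h2 := card_pos.2 (nonpar_meet (p := p) (p' := p') h)
  omega


def lineMap' (x d : F × F) : Fin 2 → Polynomial F :=
  ![Polynomial.C x.1 + Polynomial.C d.1 * Polynomial.X,
    Polynomial.C x.2 + Polynomial.C d.2 * Polynomial.X]

def linePoly (Pq : MvPolynomial (Fin 2) F) (x d : F × F) : Polynomial F :=
  MvPolynomial.aeval (lineMap' x d) Pq

lemma eval_linePoly (Pq : MvPolynomial (Fin 2) F) (x d : F × F) (t : F) :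
    (linePoly Pq x d).eval t = MvPolynomial.eval ![(x + t • d).1, (x + t • d).2] Pq := by
  rw [linePoly, MvPolynomial.aeval_def, Polynomial.algebraMap_eq]
  have h := MvPolynomial.eval₂_comp_left (Polynomial.evalRingHom t)
    (Polynomial.C : F →+* Polynomial F) (lineMap' x d) Pq
  simp only [Polynomial.coe_evalRingHom] at h
  rw [h]
  have h2 : (Polynomial.evalRingHom t).comp (Polynomial.C : F →+* Polynomial F) = RingHom.id F := by
    ext a; simp
  rw [h2]
  have h3 : (fun p => Polynomial.eval t p) ∘ (lineMap' x d) = ![(x + t • d).1, (x + t • d).2] := by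
    funext i
    fin_cases i <;> simp [lineMap', Prod.smul_def, smul_eq_mul] <;> ring
  rw [h3, MvPolynomial.eval₂_id]

lemma natDegree_linePoly (Pq : MvPolynomial (Fin 2) F) (x d : F × F) :
    (linePoly Pq x d).natDegree ≤ Pq.totalDegree := by
  rw [linePoly]
  conv_lhs => rw [Pq.as_sum]
  rw [map_sum]
  apply Polynomial.natDegree_sum_le_of_forall_le
  intro v hv
  rw [MvPolynomial.aeval_monomial]
  refine le_trans (Polynomial.natDegree_mul_le) ?_
  have h0 : (algebraMap F (Polynomial F) (MvPolynomial.coeff v Pq)).natDegree = 0 := by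
    simp [Polynomial.algebraMap_eq]
  rw [h0, zero_add]
  refine le_trans ?_ (MvPolynomial.le_totalDegree hv)
  rw [Finsupp.prod]
  refine le_trans (Polynomial.natDegree_prod_le _ _) ?_
  have : (v.sum fun _ e => e) = ∑ i ∈ v.support, v i := rfl
  rw [this]
  apply Finset.sum_le_sum
  intro i _
  refine le_trans (Polynomial.natDegree_pow_le) ?_
  have h1 : (lineMap' x d i).natDegree ≤ 1 := by
    fin_cases i <;>
    · refine le_trans (Polynomial.natDegree_add_le _ _) ?_
      simp [lineMap']
      refine le_trans (Polynomial.natDegree_mul_le) ?_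
      simp
  calc v i * (lineMap' x d i).natDegree ≤ v i * 1 := Nat.mul_le_mul_left _ h1
    _ = v i := by omega


lemma card_inter_zeros_le (Pq : MvPolynomial (Fin 2) F) (hdeg : Pq.totalDegree ≤ 5)
    (x d : F × F) (Z : Finset (F × F))
    (hZ : ∀ p ∈ Z, MvPolynomial.eval ![p.1, p.2] Pq = 0)
    (hnz : ∃ y ∈ lineF x d, MvPolynomial.eval ![y.1, y.2] Pq ≠ 0) :
    ((lineF x d) ∩ Z).card ≤ 5 := by
  classical
  set ρ := linePoly Pq x d with hρ
  obtain ⟨y, hy, hyne⟩ := hnz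
  obtain ⟨ty, rfl⟩ := mem_lineF.1 hy
  have hρne : ρ ≠ 0 := by
    intro h0
    apply hyne
    rw [← eval_linePoly, ← hρ, h0, Polynomial.eval_zero]
  have hcard : ρ.roots.toFinset.card ≤ 5 :=
    le_trans (Multiset.toFinset_card_le _) (le_trans (Polynomial.card_roots' ρ)
      (le_trans (natDegree_linePoly Pq x d) hdeg))
  set tm : F × F → F := fun z => if h : z ∈ lineF x d then Classical.choose (mem_lineF.1 h) else 0
    with htm
  have hpt : ∀ z ∈ lineF x d, z = x + (tm z) • d := by
    intro z hz
    simp only [htm, dif_pos hz]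
    exact Classical.choose_spec (mem_lineF.1 hz)
  refine le_trans (Finset.card_le_card_of_injOn tm ?_ ?_) hcard
  · intro z hz
    rw [Finset.mem_coe, Finset.mem_inter] at hz
    rw [Finset.mem_coe, Multiset.mem_toFinset, Polynomial.mem_roots hρne]
    have h1 : ρ.eval (tm z) = 0 := by
      rw [hρ, eval_linePoly, ← hpt z hz.1]
      exact (by simpa using hZ z hz.2)
    exact h1
  · intro z1 h1 z2 h2 he
    rw [Finset.coe_inter, Set.mem_inter_iff, Finset.mem_coe] at h1 h2
    rw [hpt z1 h1.1, hpt z2 h2.1, he]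
def Dr (o : Option F) : F × F := o.elim (0, 1) (fun s => (1, s))

lemma Dr_ne_zero (o : Option F) : (Dr o : F × F) ≠ 0 := by
  cases o with
  | none => intro h; exact one_ne_zero (congrArg Prod.snd h)
  | some s => intro h; exact one_ne_zero (congrArg Prod.fst h)

def pdir (x y : F × F) : Option F :=
  if y.1 = x.1 then none else some ((y.2 - x.2) / (y.1 - x.1))

lemma mem_pencil_iff {x y : F × F} (hyx : y ≠ x) (o : Option F) :
    y ∈ lineF x (Dr o) ↔ pdir x y = o := by
  constructor
  · intro hyl
    obtain ⟨t, rfl⟩ := mem_lineF.1 hyl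
    have ht : t ≠ 0 := by rintro rfl; simp at hyx
    cases o with
    | none =>
      have h1 : (x + t • (Dr (none : Option F) : F × F)).1 = x.1 := by
        simp [Dr, Prod.smul_def]
      rw [pdir, if_pos h1]
    | some s =>
      have h1 : (x + t • (Dr (some s) : F × F)).1 = x.1 + t := by
        simp [Dr, Prod.smul_def]
      have h2 : (x + t • (Dr (some s) : F × F)).2 = x.2 + t * s := by
        simp [Dr, Prod.smul_def]
      rw [pdir, h1, h2, if_neg (by intro h; exact ht (by linear_combination h))]
      congr 1
      simp only [add_sub_cancel_left]; exact mul_div_cancel_left₀ s ht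
  · intro hyφ
    cases o with
    | none =>
      rw [pdir] at hyφ
      by_cases h1 : y.1 = x.1
      · exact mem_lineF.2 ⟨y.2 - x.2, Prod.ext (by simp [Dr, Prod.smul_def, h1])
          (by simp [Dr, Prod.smul_def])⟩
      · rw [if_neg h1] at hyφ; exact absurd hyφ (by simp)
    | some s =>
      rw [pdir] at hyφ
      by_cases h1 : y.1 = x.1
      · rw [if_pos h1] at hyφ; exact absurd hyφ (by simp)
      · rw [if_neg h1] at hyφ
        have hne : y.1 - x.1 ≠ 0 := sub_ne_zero.2 h1
        have hs : y.2 - x.2 = s * (y.1 - x.1) := by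
          rw [← div_eq_iff hne]
          simpa using hyφ
        refine mem_lineF.2 ⟨y.1 - x.1, Prod.ext ?_ ?_⟩
        · simp [Dr, Prod.smul_def]
        · simp only [Dr, Option.elim, Prod.smul_def, smul_eq_mul, Prod.snd_add]
          linear_combination hs

lemma pencil_partition (x : F × F) (S : Finset (F × F)) (hx : x ∉ S) :
    ∑ o : Option F, ((lineF x (Dr o)) ∩ S).card = S.card := by
  classical
  have h := Finset.card_eq_sum_card_fiberwise
    (f := pdir x) (s := S) (t := univ) (fun y _ => mem_univ _)
  rw [h]
  apply Finset.sum_congr rfl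
  intro o _
  congr 1
  ext y
  simp only [Finset.mem_inter, Finset.mem_filter]
  have hyx : y ∈ S → y ≠ x := fun hyS h => hx (h ▸ hyS)
  constructor
  · rintro ⟨hyl, hyS⟩
    exact ⟨hyS, (mem_pencil_iff (hyx hyS) o).1 hyl⟩
  · rintro ⟨hyS, hyφ⟩
    exact ⟨(mem_pencil_iff (hyx hyS) o).2 hyφ, hyS⟩

lemma part2 (q : ℕ) (hq : Fintype.card F = q) (hq13 : 13 ≤ q)
    (Pq : MvPolynomial (Fin 2) F) (hdeg : Pq.totalDegree ≤ 5)
    (Z : Finset (F × F)) (hZdef : Z = univ.filter (fun p => MvPolynomial.eval ![p.1, p.2] Pq = 0))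
    (hZcard : Z.card = 5 * q - 5)
    (x : F × F) (hxZ : x ∈ Z)
    (hnofull : ∀ o : Option F, ¬ (lineF x (Dr o) ⊆ Z)) : False := by
  classical
  have key : ∀ o : Option F, ((lineF x (Dr o)) ∩ (Z.erase x)).card ≤ 4 := by
    intro o
    obtain ⟨y, hyl, hyZ⟩ := Finset.not_subset.1 (hnofull o)
    have h5 : ((lineF x (Dr o)) ∩ Z).card ≤ 5 := by
      apply card_inter_zeros_le Pq hdeg x (Dr o) Z
      · intro p hp; rw [hZdef] at hp; exact (Finset.mem_filter.1 hp).2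
      · exact ⟨y, hyl, by rw [hZdef] at hyZ; simpa using hyZ⟩
    have hxm : x ∈ (lineF x (Dr o)) ∩ Z := Finset.mem_inter.2 ⟨self_mem_lineF _ _, hxZ⟩
    have : (lineF x (Dr o)) ∩ (Z.erase x) = ((lineF x (Dr o)) ∩ Z).erase x := by
      ext z; simp [Finset.mem_erase, Finset.mem_inter]; tauto
    rw [this, Finset.card_erase_of_mem hxm]
    omega
  have hsum := pencil_partition x (Z.erase x) (Finset.notMem_erase _ _)
  have hle : (Z.erase x).card ≤ ∑ _o : Option F, 4 := by
    rw [← hsum]; exact Finset.sum_le_sum (fun o _ => key o)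
  rw [Finset.sum_const, Finset.card_univ, Fintype.card_option, hq,
    Finset.card_erase_of_mem hxZ, hZcard] at hle
  simp at hle
  omega

lemma nat_max4 {a b g R : ℕ} (ha : 1 ≤ a) (hb : 1 ≤ b) (hg : 1 ≤ g)
    (hs : a + b + g + R = 5) : a * a + b * b + g * g + R * R ≤ 11 := by
  have h1 : a ≤ 5 := by omega
  have h2 : b ≤ 5 := by omega
  have h3 : g ≤ 5 := by omega
  have h4 : R ≤ 5 := by omega
  interval_cases a <;> interval_cases b <;> interval_cases g <;> interval_cases R <;> omega

lemma nat_max5 {a b g d R : ℕ} (ha : 1 ≤ a) (hb : 1 ≤ b) (hg : 1 ≤ g) (hd : 1 ≤ d)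
    (hs : a + b + g + d + R = 5) : a * a + b * b + g * g + d * d + R * R ≤ 7 := by
  have h1 : a ≤ 5 := by omega
  have h2 : b ≤ 5 := by omega
  have h3 : g ≤ 5 := by omega
  have h4 : d ≤ 5 := by omega
  have h5' : R ≤ 5 := by omega
  interval_cases a <;> interval_cases b <;> interval_cases g <;> interval_cases d <;>
    interval_cases R <;> omega

lemma sumsq_le {α : Type*} (s : Finset α) (g : α → ℕ) :
    ∑ v ∈ s, g v * g v ≤ (∑ v ∈ s, g v) * (∑ v ∈ s, g v) := by
  calc ∑ v ∈ s, g v * g v ≤ ∑ v ∈ s, g v * (∑ w ∈ s, g w) := by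
        apply Finset.sum_le_sum
        intro v hv
        exact Nat.mul_le_mul_left _ (Finset.single_le_sum (fun _ _ => Nat.zero_le _) hv)
    _ = (∑ v ∈ s, g v) * (∑ v ∈ s, g v) := by rw [← Finset.sum_mul]

lemma no15 (n : Fin 5 → ℕ) (h5 : ∑ v, n v = 5) (h15 : ∑ v, n v * n v = 15) : False := by
  by_cases h : ∃ v, 3 ≤ n v
  · obtain ⟨v, hv⟩ := h
    have hsplit : n v + ∑ w ∈ univ.erase v, n w = 5 := by
      rw [Finset.add_sum_erase _ n (mem_univ v)]; exact h5
    have hsplit2 : n v * n v + ∑ w ∈ univ.erase v, (fun w => n w * n w) w = 15 := by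
      rw [Finset.add_sum_erase _ (fun w => n w * n w) (mem_univ v)]; exact h15
    simp only at hsplit2
    have hrest : ∑ w ∈ univ.erase v, n w * n w ≤
        (∑ w ∈ univ.erase v, n w) * (∑ w ∈ univ.erase v, n w) := sumsq_le _ _
    have hv5 : n v ≤ 5 := by omega
    have hR : ∑ w ∈ univ.erase v, n w = 5 - n v := by omega
    rw [hR] at hrest
    interval_cases h : n v <;> simp_all <;> omega
  · push_neg at h
    have : ∑ v, n v * n v ≤ ∑ v, 2 * n v := by
      apply Finset.sum_le_sum
      intro v _
      have h2 : n v ≤ 2 := by have := h v; omega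
      exact Nat.mul_le_mul_right _ h2
    rw [← Finset.mul_sum, h5] at this
    omega

lemma extract3 (n : Fin 5 → ℕ) (h5 : ∑ v, n v = 5) (h11 : 11 ≤ ∑ v, n v * n v) :
    ∃ v, 3 ≤ n v := by
  by_contra h
  push_neg at h
  have : ∑ v, n v * n v ≤ ∑ v, 2 * n v := by
    apply Finset.sum_le_sum
    intro v _
    have h2 : n v ≤ 2 := by have := h v; omega
    exact Nat.mul_le_mul_right _ h2
  rw [← Finset.mul_sum, h5] at this
  omega


section Part4
variable (L : Fin 5 → Finset (F × F))

lemma mem_U_of_mem {i : Fin 5} {p : F × F} (hp : p ∈ L i) : p ∈ univ.biUnion L :=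
  Finset.mem_biUnion.2 ⟨i, mem_univ i, hp⟩

lemma sum_m :
    ∑ p ∈ univ.biUnion L, (univ.filter (fun i => p ∈ L i)).card = ∑ i, (L i).card := by
  have h1 : ∀ p : F × F, (univ.filter (fun i => p ∈ L i)).card
      = ∑ i, if p ∈ L i then 1 else 0 := by
    intro p; rw [Finset.card_filter]
  rw [Finset.sum_congr rfl (fun p _ => h1 p), Finset.sum_comm]
  apply Finset.sum_congr rfl
  intro i _
  rw [← Finset.card_filter]
  congr 1
  ext p
  simp only [Finset.mem_filter]
  exact ⟨fun h => h.2, fun h => ⟨mem_U_of_mem L h, h⟩⟩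

lemma sum_mm :
    ∑ p ∈ univ.biUnion L, ((univ.filter (fun i => p ∈ L i)).card *
      ((univ.filter (fun i => p ∈ L i)).card - 1))
    = ∑ ij ∈ (univ : Finset (Fin 5)).offDiag, (L ij.1 ∩ L ij.2).card := by
  have key : ∀ p : F × F, (univ.filter (fun i => p ∈ L i)).card *
      ((univ.filter (fun i => p ∈ L i)).card - 1)
      = ∑ ij ∈ (univ : Finset (Fin 5)).offDiag, if p ∈ L ij.1 ∧ p ∈ L ij.2 then 1 else 0 := by
    intro p
    rw [← Finset.card_filter]
    have h2 : (univ : Finset (Fin 5)).offDiag.filter (fun ij => p ∈ L ij.1 ∧ p ∈ L ij.2)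
        = (univ.filter (fun i => p ∈ L i)).offDiag := by
      ext ij
      simp only [Finset.mem_filter, Finset.mem_offDiag]
      tauto
    rw [h2, Finset.offDiag_card, Nat.mul_comm, Nat.sub_one_mul]
  rw [Finset.sum_congr rfl (fun p _ => key p), Finset.sum_comm]
  apply Finset.sum_congr rfl
  intro ij _
  rw [← Finset.card_filter]
  congr 1
  ext p
  simp only [Finset.mem_filter, Finset.mem_inter]
  exact ⟨fun h => h.2, fun h => ⟨mem_U_of_mem L h.1, h⟩⟩

end Part4

section Classifier
variable (c : Fin 5 → Fin 5)

def fb (v : Fin 5) : Finset (Fin 5) := univ.filter (fun i => c i = v)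

lemma fb_sum : ∑ v, (fb c v).card = 5 := by
  have h := Finset.card_eq_sum_card_fiberwise (f := c) (s := (univ : Finset (Fin 5)))
    (t := univ) (fun i _ => mem_univ (c i))
  simp only [fb]
  rw [← h]
  simp

lemma PP_fib : (univ.offDiag.filter (fun ij => c ij.1 = c ij.2)).card + 5
    = ∑ v, (fb c v).card * (fb c v).card := by
  classical
  set W := ((univ : Finset (Fin 5)) ×ˢ (univ : Finset (Fin 5))).filter
    (fun ij => c ij.1 = c ij.2) with hW
  have h1 : W.card = ∑ v, (W.filter (fun ij => c ij.1 = v)).card :=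
    Finset.card_eq_sum_card_fiberwise (f := fun ij : Fin 5 × Fin 5 => c ij.1) (fun i _ => mem_univ _)
  have h2 : ∀ v, W.filter (fun ij => c ij.1 = v) = (fb c v) ×ˢ (fb c v) := by
    intro v
    ext ij
    simp only [hW, Finset.mem_filter, Finset.mem_product, fb, Finset.mem_univ, true_and]
    constructor
    · rintro ⟨hc, hv⟩
      exact ⟨hv, hc.symm.trans hv⟩
    · rintro ⟨h1, h2⟩
      exact ⟨h1.trans h2.symm, h1⟩
  have h3 : W.card = (univ.offDiag.filter (fun ij => c ij.1 = c ij.2)).card + 5 := by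
    have hsplit := Finset.card_filter_add_card_filter_not
      (s := W) (p := fun ij => ij.1 = ij.2)
    have hdiag : W.filter (fun ij => ij.1 = ij.2) = univ.image (fun i => (i, i)) := by
      ext ij
      simp only [hW, Finset.mem_filter, Finset.mem_product, Finset.mem_image, Finset.mem_univ,
        true_and]
      constructor
      · rintro ⟨_, h⟩; exact ⟨ij.1, Prod.ext rfl h⟩
      · rintro ⟨k, hk⟩; rw [← hk]; simp
    have hoff : W.filter (fun ij => ¬ ij.1 = ij.2)
        = univ.offDiag.filter (fun ij => c ij.1 = c ij.2) := by
      ext ij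
      simp only [hW, Finset.mem_filter, Finset.mem_product, Finset.mem_offDiag, Finset.mem_univ,
        true_and]
      tauto
    have hdc : (univ.image (fun i : Fin 5 => (i, i))).card = 5 := by
      rw [Finset.card_image_of_injective _ (fun a b h => (Prod.mk.injEq _ _ _ _ ▸ h).1)]
      simp
    rw [hdiag, hoff, hdc] at hsplit
    omega
  rw [← h3, h1]
  apply Finset.sum_congr rfl
  intro v _
  rw [h2 v, Finset.card_product]

lemma card_fb_pos (x : Fin 5) : 1 ≤ (fb c (c x)).card :=
  Finset.card_pos.2 ⟨x, by simp [fb]⟩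

lemma classes3 {x y z : Fin 5} (hxy : c x ≠ c y) (hxz : c x ≠ c z) (hyz : c y ≠ c z) :
    ∑ v, (fb c v).card * (fb c v).card ≤ 11 := by
  classical
  set T : Finset (Fin 5) := {c x, c y, c z} with hT
  have hTsub : T ⊆ univ := Finset.subset_univ _
  have hsplit : ∀ g : Fin 5 → ℕ, ∑ v ∈ univ \ T, g v + ∑ v ∈ T, g v = ∑ v, g v :=
    fun g => Finset.sum_sdiff hTsub
  have hTs : ∀ g : Fin 5 → ℕ, ∑ v ∈ T, g v = g (c x) + g (c y) + g (c z) := by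
    intro g
    rw [hT, Finset.sum_insert (by simp [hxy, hxz]), Finset.sum_insert (by simp [hyz]),
      Finset.sum_singleton, add_assoc]
  have h5 := fb_sum c
  have hA := card_fb_pos c x
  have hB := card_fb_pos c y
  have hG := card_fb_pos c z
  have hRsq := sumsq_le (univ \ T) (fun v => (fb c v).card)
  have e1 := hsplit (fun v => (fb c v).card)
  have e2 := hsplit (fun v => (fb c v).card * (fb c v).card)
  rw [hTs] at e1 e2
  set R := ∑ v ∈ univ \ T, (fb c v).card with hR
  have := nat_max4 hA hB hG (R := R) (by omega)
  omega

lemma classes4 {x y z w : Fin 5} (hxy : c x ≠ c y) (hxz : c x ≠ c z) (hxw : c x ≠ c w)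
    (hyz : c y ≠ c z) (hyw : c y ≠ c w) (hzw : c z ≠ c w) :
    ∑ v, (fb c v).card * (fb c v).card ≤ 7 := by
  classical
  set T : Finset (Fin 5) := {c x, c y, c z, c w} with hT
  have hTsub : T ⊆ univ := Finset.subset_univ _
  have hsplit : ∀ g : Fin 5 → ℕ, ∑ v ∈ univ \ T, g v + ∑ v ∈ T, g v = ∑ v, g v :=
    fun g => Finset.sum_sdiff hTsub
  have hTs : ∀ g : Fin 5 → ℕ, ∑ v ∈ T, g v = g (c x) + g (c y) + g (c z) + g (c w) := by
    intro g
    rw [hT, Finset.sum_insert (by simp [hxy, hxz, hxw]), Finset.sum_insert (by simp [hyz, hyw]),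
      Finset.sum_insert (by simp [hzw]), Finset.sum_singleton]
    ring
  have h5 := fb_sum c
  have hA := card_fb_pos c x
  have hB := card_fb_pos c y
  have hG := card_fb_pos c z
  have hD := card_fb_pos c w
  have hRsq := sumsq_le (univ \ T) (fun v => (fb c v).card)
  have e1 := hsplit (fun v => (fb c v).card)
  have e2 := hsplit (fun v => (fb c v).card * (fb c v).card)
  rw [hTs] at e1 e2
  set R := ∑ v ∈ univ \ T, (fb c v).card with hR
  have := nat_max5 hA hB hG hD (R := R) (by omega)
  omega

end Classifier

lemma part4 (q : ℕ) (hq : Fintype.card F = q) (hq13 : 13 ≤ q)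
    (Ln : Fin 5 → Finset (F × F)) (ptv dirv : Fin 5 → F × F)
    (hdir : ∀ i, dirv i ≠ 0)
    (hLn : ∀ i, Ln i = lineF (ptv i) (dirv i))
    (hinj : Function.Injective Ln)
    (hU : (univ.biUnion Ln).card = 5 * q - 5) : False := by
  classical
  set U := univ.biUnion Ln with hUdef
  set m : F × F → ℕ := fun p => (univ.filter (fun i => p ∈ Ln i)).card with hm
  set Par : Fin 5 → Fin 5 → Prop := fun i j => crossP (dirv i) (dirv j) = 0 with hPar
  have hParRefl : ∀ i, Par i i := fun i => by simp only [hPar, crossP]; ring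
  have hParSymm : ∀ {i j}, Par i j → Par j i := fun h => cross_symm_zero h
  have hParTrans : ∀ {i j k}, Par i j → Par j k → Par i k := fun hij hjk =>
    cross_trans (hdir _) hij hjk
  have hLcard : ∀ i, (Ln i).card = q := fun i => by rw [hLn i, card_lineF _ (hdir i), hq]
  have hLne : ∀ {i j : Fin 5}, i ≠ j → Ln i ≠ Ln j := fun h he => h (hinj he)
  have hInterPar : ∀ {i j}, i ≠ j → Par i j → Ln i ∩ Ln j = ∅ := by
    intro i j hij hp
    rw [hLn i, hLn j]
    exact par_disjoint (hdir i) (hdir j) hp (by rw [← hLn i, ← hLn j]; exact hLne hij)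
  have hInterNP : ∀ {i j}, i ≠ j → ¬ Par i j → (Ln i ∩ Ln j).card = 1 := by
    intro i j hij hp
    rw [hLn i, hLn j]
    exact card_inter_nonpar (hdir i) (hdir j) hp (by rw [← hLn i, ← hLn j]; exact hLne hij)
  have hInterCard : ∀ {i j}, i ≠ j → (Ln i ∩ Ln j).card = if Par i j then 0 else 1 := by
    intro i j hij
    by_cases hp : Par i j
    · rw [if_pos hp, hInterPar hij hp]; simp
    · rw [if_neg hp]; exact hInterNP hij hp
  have hTwoPt : ∀ {p r : F × F}, p ≠ r → ∀ {i j}, p ∈ Ln i → r ∈ Ln i → p ∈ Ln j →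
      r ∈ Ln j → i = j := by
    intro p r hpr i j hpi hri hpj hrj
    by_contra hij
    apply hLne hij
    rw [hLn i] at hpi hri
    rw [hLn j] at hpj hrj
    rw [hLn i, hLn j, lineF_two_points (hdir i) hpi hri hpr,
      lineF_two_points (hdir j) hpj hrj hpr]
  have hNoParMem : ∀ {p : F × F} {i j}, i ≠ j → p ∈ Ln i → p ∈ Ln j → ¬ Par i j := by
    intro p i j hij hpi hpj hp
    have h := hInterPar hij hp
    exact absurd (Finset.mem_inter.2 ⟨hpi, hpj⟩) (by rw [h]; simp)
  -- classifier
  have hne : ∀ i : Fin 5, (univ.filter (fun j => Par j i)).Nonempty :=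
    fun i => ⟨i, Finset.mem_filter.2 ⟨mem_univ i, hParRefl i⟩⟩
  set c : Fin 5 → Fin 5 := fun i => (univ.filter (fun j => Par j i)).min' (hne i) with hc
  have hcPar : ∀ i, Par (c i) i :=
    fun i => (Finset.mem_filter.1 ((univ.filter (fun j => Par j i)).min'_mem (hne i))).2
  have hcEq : ∀ i j, Par i j ↔ c i = c j := by
    intro i j
    constructor
    · intro hp
      have hfe : univ.filter (fun k => Par k i) = univ.filter (fun k => Par k j) := by
        ext k
        simp only [Finset.mem_filter, Finset.mem_univ, true_and]
        exact ⟨fun h => hParTrans h hp, fun h => hParTrans h (hParSymm hp)⟩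
      simp only [hc]
      congr 1
    · intro hcij
      have h1 := hcPar i
      have h2 := hcPar j
      rw [hcij] at h1
      exact hParTrans (hParSymm h1) h2
  -- counting identities
  have hsum1 : ∑ p ∈ U, m p = 5 * q := by
    calc ∑ p ∈ U, m p = ∑ i, (Ln i).card := sum_m Ln
      _ = ∑ _i : Fin 5, q := Finset.sum_congr rfl fun i _ => hLcard i
      _ = 5 * q := by simp [mul_comm]
  set NPc := (univ.offDiag.filter (fun ij : Fin 5 × Fin 5 => ¬ Par ij.1 ij.2)).card with hNP
  set PPc := (univ.offDiag.filter (fun ij : Fin 5 × Fin 5 => Par ij.1 ij.2)).card with hPP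
  have hsum2 : ∑ p ∈ U, m p * (m p - 1) = NPc := by
    calc ∑ p ∈ U, m p * (m p - 1)
        = ∑ ij ∈ (univ : Finset (Fin 5)).offDiag, (Ln ij.1 ∩ Ln ij.2).card := sum_mm Ln
      _ = ∑ ij ∈ (univ : Finset (Fin 5)).offDiag, (if Par ij.1 ij.2 then 0 else 1) :=
          Finset.sum_congr rfl fun ij hij => hInterCard (Finset.mem_offDiag.1 hij).2.2
      _ = NPc := by
          rw [hNP, Finset.card_filter]
          apply Finset.sum_congr rfl
          intro ij _
          by_cases hp : Par ij.1 ij.2 <;> simp [hp]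
  have hm1 : ∀ p ∈ U, 1 ≤ m p := by
    intro p hp
    obtain ⟨i, _, hpi⟩ := Finset.mem_biUnion.1 hp
    exact Finset.card_pos.2 ⟨i, Finset.mem_filter.2 ⟨mem_univ i, hpi⟩⟩
  have hm5 : ∀ p, m p ≤ 5 := by
    intro p
    calc m p ≤ (univ : Finset (Fin 5)).card := Finset.card_filter_le _ _
      _ = 5 := by simp
  have hUcard : U.card = 5 * q - 5 := hU
  have hEsum : ∑ p ∈ U, (m p - 1) = 5 := by
    have h2 : ∑ p ∈ U, (m p - 1) + ∑ p ∈ U, 1 = ∑ p ∈ U, m p := by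
      rw [← Finset.sum_add_distrib]
      exact Finset.sum_congr rfl (fun p hp => by have := hm1 p hp; omega)
    rw [Finset.sum_const, smul_eq_mul, mul_one, hUcard, hsum1] at h2
    omega
  have hNPPP : NPc + PPc = 20 := by
    have h := Finset.card_filter_add_card_filter_not
      (s := (univ : Finset (Fin 5)).offDiag) (p := fun ij => Par ij.1 ij.2)
    rw [Finset.offDiag_card] at h
    simp only [card_univ, Fintype.card_fin] at h
    omega
  have hPPfib : PPc + 5 = ∑ v, (fb c v).card * (fb c v).card := by
    have h := PP_fib c
    have he : univ.offDiag.filter (fun ij : Fin 5 × Fin 5 => Par ij.1 ij.2)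
        = univ.offDiag.filter (fun ij => c ij.1 = c ij.2) := by
      apply Finset.filter_congr
      intro ij _
      first
      | exact hcEq ij.1 ij.2
      | exact propext (hcEq ij.1 ij.2)
      | (simp only [eq_iff_iff]; exact hcEq ij.1 ij.2)
    rw [hPP, he, h]
  have hcne : ∀ {i j : Fin 5} {p : F × F}, i ≠ j → p ∈ Ln i → p ∈ Ln j → c i ≠ c j := by
    intro i j p hij hpi hpj hcij
    exact hNoParMem hij hpi hpj ((hcEq i j).2 hcij)
  -- case analysis
  by_cases h4 : ∃ p ∈ U, 5 ≤ m p
  · obtain ⟨p, hpU, hp5⟩ := h4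
    have hmp : m p = 5 := le_antisymm (hm5 p) hp5
    have hSp : univ.filter (fun i => p ∈ Ln i) = univ := by
      apply Finset.eq_univ_of_card
      have h5' : (univ.filter (fun i => p ∈ Ln i)).card = 5 := hmp
      simp [h5']
    have hallmem : ∀ i, p ∈ Ln i := by
      intro i
      have hmem : i ∈ univ.filter (fun i => p ∈ Ln i) := by rw [hSp]; exact mem_univ i
      exact (Finset.mem_filter.1 hmem).2
    have hPP0 : PPc = 0 := by
      rw [hPP, Finset.card_eq_zero]
      rw [Finset.eq_empty_iff_forall_notMem]
      intro ij hij
      rw [Finset.mem_filter, Finset.mem_offDiag] at hij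
      exact hNoParMem hij.1.2.2 (hallmem ij.1) (hallmem ij.2) hij.2
    have hsplit := Finset.add_sum_erase U (fun r => m r * (m r - 1)) hpU
    simp only [hmp] at hsplit
    have hz : ∑ r ∈ U.erase p, m r * (m r - 1) = 0 := by omega
    have hsplit2 := Finset.add_sum_erase U (fun r => m r - 1) hpU
    simp only [hmp] at hsplit2
    have h1 : ∑ r ∈ U.erase p, (m r - 1) = 1 := by omega
    obtain ⟨r, hr, hrne⟩ := Finset.exists_ne_zero_of_sum_ne_zero (by omega :
      ∑ r ∈ U.erase p, (m r - 1) ≠ 0)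
    have hzero := (Finset.sum_eq_zero_iff.1 hz) r hr
    rcases Nat.mul_eq_zero.1 hzero with h | h <;> omega
  · push_neg at h4
    by_cases h3 : ∃ p ∈ U, m p = 4
    · obtain ⟨p, hpU, hmp⟩ := h3
      have hother : ∀ r ∈ U, r ≠ p → m r ≤ 2 := by
        intro r hrU hrp
        by_contra hmr
        push_neg at hmr
        have hcap : ((univ.filter (fun i => p ∈ Ln i)) ∩ (univ.filter (fun i => r ∈ Ln i))).card ≤ 1 := by
          rw [Finset.card_le_one]
          intro a ha b hb
          rw [Finset.mem_inter, Finset.mem_filter, Finset.mem_filter] at ha hb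
          exact hTwoPt (fun h => hrp h.symm) ha.1.2 ha.2.2 hb.1.2 hb.2.2
        have hcup := Finset.card_union_add_card_inter
          (univ.filter (fun i => p ∈ Ln i)) (univ.filter (fun i => r ∈ Ln i))
        have h5 : ((univ.filter (fun i => p ∈ Ln i)) ∪ (univ.filter (fun i => r ∈ Ln i))).card ≤ 5 := by
          calc _ ≤ (univ : Finset (Fin 5)).card := Finset.card_le_card (Finset.subset_univ _)
            _ = 5 := by simp
        have e1 : (univ.filter (fun i => p ∈ Ln i)).card = 4 := hmp
        have e2 : (univ.filter (fun i => r ∈ Ln i)).card = m r := rfl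
        rw [e1, e2] at hcup
        omega
      have hsplit2 := Finset.add_sum_erase U (fun r => m r - 1) hpU
      simp only [hmp] at hsplit2
      have hrest : ∑ r ∈ U.erase p, (m r - 1) = 2 := by omega
      have hrest2 : ∑ r ∈ U.erase p, m r * (m r - 1) = 4 := by
        have he : ∑ r ∈ U.erase p, m r * (m r - 1) = ∑ r ∈ U.erase p, 2 * (m r - 1) := by
          apply Finset.sum_congr rfl
          intro r hr
          have h1 := hm1 r (Finset.mem_of_mem_erase hr)
          have h2 := hother r (Finset.mem_of_mem_erase hr) (Finset.ne_of_mem_erase hr)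
          interval_cases h : m r <;> simp
        rw [he, ← Finset.mul_sum, hrest]
        norm_num
      have hNPval : NPc = 16 := by
        have hsplit := Finset.add_sum_erase U (fun r => m r * (m r - 1)) hpU
        simp only [hmp] at hsplit
        omega
      have hPPval : PPc = 4 := by omega
      -- extract 4 lines through p
      have hmp' : (univ.filter (fun i => p ∈ Ln i)).card = 4 := hmp
      obtain ⟨i1, hi1⟩ := Finset.card_pos.1 (by omega : 0 < (univ.filter (fun i => p ∈ Ln i)).card)
      have herase : ((univ.filter (fun i => p ∈ Ln i)).erase i1).card = 3 := by
        rw [Finset.card_erase_of_mem hi1, hmp']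
      obtain ⟨i2, i3, i4, h23, h24, h34, hset⟩ := Finset.card_eq_three.1 herase
      have hin : ∀ j, j ∈ ({i2, i3, i4} : Finset (Fin 5)) → j ≠ i1 ∧ p ∈ Ln j := by
        intro j hj
        rw [← hset] at hj
        exact ⟨Finset.ne_of_mem_erase hj,
          (Finset.mem_filter.1 (Finset.mem_of_mem_erase hj)).2⟩
      have hp1 : p ∈ Ln i1 := (Finset.mem_filter.1 hi1).2
      have h2' := hin i2 (by simp)
      have h3' := hin i3 (by simp)
      have h4' := hin i4 (by simp)
      have hcl := classes4 c (x := i1) (y := i2) (z := i3) (w := i4)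
        (hcne (fun h => h2'.1 h.symm) hp1 h2'.2) (hcne (fun h => h3'.1 h.symm) hp1 h3'.2)
        (hcne (fun h => h4'.1 h.symm) hp1 h4'.2) (hcne h23 h2'.2 h3'.2)
        (hcne h24 h2'.2 h4'.2) (hcne h34 h3'.2 h4'.2)
      omega
    · have hall3 : ∀ p ∈ U, m p ≤ 3 := by
        intro p hp
        have := h4 p hp
        by_contra hc4
        exact h3 ⟨p, hp, by omega⟩
      by_cases h2 : ∃ p ∈ U, ∃ r ∈ U, p ≠ r ∧ m p = 3 ∧ m r = 3
      · obtain ⟨p, hpU, r, hrU, hpr, hmp, hmr⟩ := h2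
        have hcap : ((univ.filter (fun i => p ∈ Ln i)) ∩ (univ.filter (fun i => r ∈ Ln i))).card ≤ 1 := by
          rw [Finset.card_le_one]
          intro a ha b hb
          rw [Finset.mem_inter, Finset.mem_filter, Finset.mem_filter] at ha hb
          exact hTwoPt hpr ha.1.2 ha.2.2 hb.1.2 hb.2.2
        have hcup := Finset.card_union_add_card_inter
          (univ.filter (fun i => p ∈ Ln i)) (univ.filter (fun i => r ∈ Ln i))
        have e1 : (univ.filter (fun i => p ∈ Ln i)).card = 3 := hmp
        have e2 : (univ.filter (fun i => r ∈ Ln i)).card = 3 := hmr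
        rw [e1, e2] at hcup
        have h5 : ((univ.filter (fun i => p ∈ Ln i)) ∪ (univ.filter (fun i => r ∈ Ln i))).card ≤ 5 := by
          calc _ ≤ (univ : Finset (Fin 5)).card := Finset.card_le_card (Finset.subset_univ _)
            _ = 5 := by simp
        have huniv : (univ.filter (fun i => p ∈ Ln i)) ∪ (univ.filter (fun i => r ∈ Ln i)) = univ := by
          apply Finset.eq_univ_of_card
          have : ((univ.filter (fun i => p ∈ Ln i)) ∪ (univ.filter (fun i => r ∈ Ln i))).card = 5 := by omega
          simpa using this
        have hrT : r ∈ U.erase p := Finset.mem_erase.2 ⟨fun h => hpr h.symm, hrU⟩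
        have hsplitA := Finset.add_sum_erase U (fun s => m s - 1) hpU
        have hsplitB := Finset.add_sum_erase (U.erase p) (fun s => m s - 1) hrT
        simp only [hmp, hmr] at hsplitA hsplitB
        have hTsum : ∑ s ∈ (U.erase p).erase r, (m s - 1) = 1 := by omega
        have hT2 : ∀ s ∈ (U.erase p).erase r, m s ≤ 2 := by
          intro s hs
          have hle : m s - 1 ≤ 1 := hTsum ▸ Finset.single_le_sum
            (f := fun s => m s - 1) (fun _ _ => Nat.zero_le _) hs
          have := hall3 s (Finset.mem_of_mem_erase (Finset.mem_of_mem_erase hs))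
          omega
        have hTmm : ∑ s ∈ (U.erase p).erase r, m s * (m s - 1) = 2 := by
          have he : ∑ s ∈ (U.erase p).erase r, m s * (m s - 1)
              = ∑ s ∈ (U.erase p).erase r, 2 * (m s - 1) := by
            apply Finset.sum_congr rfl
            intro s hs
            have h1 := hm1 s (Finset.mem_of_mem_erase (Finset.mem_of_mem_erase hs))
            have h2 := hT2 s hs
            interval_cases h : m s <;> simp
          rw [he, ← Finset.mul_sum, hTsum]
          norm_num
        have hNPval : NPc = 14 := by
          have hspA := Finset.add_sum_erase U (fun s => m s * (m s - 1)) hpU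
          have hspB := Finset.add_sum_erase (U.erase p) (fun s => m s * (m s - 1)) hrT
          simp only [hmp, hmr] at hspA hspB
          omega
        have hPPval : PPc = 6 := by omega
        have hfib : 11 ≤ ∑ v, (fb c v).card * (fb c v).card := by omega
        obtain ⟨v, hv3⟩ := extract3 (fun v => (fb c v).card) (fb_sum c) hfib
        obtain ⟨T3, hT3sub, hT3card⟩ := Finset.exists_subset_card_eq hv3
        obtain ⟨a, b, d, hab, had, hbd, hTset⟩ := Finset.card_eq_three.1 hT3card
        have hcv : ∀ x ∈ T3, c x = v := by
          intro x hx
          exact (Finset.mem_filter.1 (hT3sub hx)).2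
        have hca : c a = v := hcv a (by rw [hTset]; simp)
        have hcb : c b = v := hcv b (by rw [hTset]; simp)
        have hcd : c d = v := hcv d (by rw [hTset]; simp)
        have hmemU : ∀ x : Fin 5, x ∈ (univ.filter (fun i => p ∈ Ln i)) ∨
            x ∈ (univ.filter (fun i => r ∈ Ln i)) := by
          intro x
          have hx : x ∈ (univ.filter (fun i => p ∈ Ln i)) ∪ (univ.filter (fun i => r ∈ Ln i)) := by
            rw [huniv]; exact mem_univ x
          exact Finset.mem_union.1 hx
        have hcontra : ∀ x y : Fin 5, x ≠ y → c x = c y →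
            ¬ (x ∈ (univ.filter (fun i => p ∈ Ln i)) ∧ y ∈ (univ.filter (fun i => p ∈ Ln i))) := by
          intro x y hxy hcxy ⟨hx, hy⟩
          exact hcne hxy (Finset.mem_filter.1 hx).2 (Finset.mem_filter.1 hy).2 hcxy
        have hcontra' : ∀ x y : Fin 5, x ≠ y → c x = c y →
            ¬ (x ∈ (univ.filter (fun i => r ∈ Ln i)) ∧ y ∈ (univ.filter (fun i => r ∈ Ln i))) := by
          intro x y hxy hcxy ⟨hx, hy⟩
          exact hcne hxy (Finset.mem_filter.1 hx).2 (Finset.mem_filter.1 hy).2 hcxy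
        rcases hmemU a with ha | ha <;> rcases hmemU b with hb | hb <;>
            rcases hmemU d with hd | hd <;>
          first
          | exact hcontra a b hab (hca.trans hcb.symm) ⟨ha, hb⟩
          | exact hcontra' a b hab (hca.trans hcb.symm) ⟨ha, hb⟩
          | exact hcontra a d had (hca.trans hcd.symm) ⟨ha, hd⟩
          | exact hcontra' a d had (hca.trans hcd.symm) ⟨ha, hd⟩
          | exact hcontra b d hbd (hcb.trans hcd.symm) ⟨hb, hd⟩
          | exact hcontra' b d hbd (hcb.trans hcd.symm) ⟨hb, hd⟩
      · by_cases h1 : ∃ p ∈ U, m p = 3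
        · obtain ⟨p, hpU, hmp⟩ := h1
          have hother : ∀ r ∈ U.erase p, m r ≤ 2 := by
            intro r hr
            have hrU := Finset.mem_of_mem_erase hr
            have hrp := Finset.ne_of_mem_erase hr
            have := hall3 r hrU
            by_contra hc2
            exact h2 ⟨p, hpU, r, hrU, fun h => hrp h.symm, hmp, by omega⟩
          have hsplit2 := Finset.add_sum_erase U (fun r => m r - 1) hpU
          simp only [hmp] at hsplit2
          have hrest : ∑ r ∈ U.erase p, (m r - 1) = 3 := by omega
          have hrest2 : ∑ r ∈ U.erase p, m r * (m r - 1) = 6 := by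
            have he : ∑ r ∈ U.erase p, m r * (m r - 1) = ∑ r ∈ U.erase p, 2 * (m r - 1) := by
              apply Finset.sum_congr rfl
              intro r hr
              have h1' := hm1 r (Finset.mem_of_mem_erase hr)
              have h2' := hother r hr
              interval_cases h : m r <;> simp
            rw [he, ← Finset.mul_sum, hrest]
            norm_num
          have hNPval : NPc = 12 := by
            have hsp := Finset.add_sum_erase U (fun r => m r * (m r - 1)) hpU
            simp only [hmp] at hsp
            omega
          have hPPval : PPc = 8 := by omega
          obtain ⟨i1, i2, i3, h12, h13, h23, hset⟩ := Finset.card_eq_three.1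
            (show (univ.filter (fun i => p ∈ Ln i)).card = 3 from hmp)
          have hin : ∀ j, j ∈ ({i1, i2, i3} : Finset (Fin 5)) → p ∈ Ln j := by
            intro j hj
            rw [← hset] at hj
            exact (Finset.mem_filter.1 hj).2
          have hcl := classes3 c (x := i1) (y := i2) (z := i3)
            (hcne h12 (hin i1 (by simp)) (hin i2 (by simp)))
            (hcne h13 (hin i1 (by simp)) (hin i3 (by simp)))
            (hcne h23 (hin i2 (by simp)) (hin i3 (by simp)))
          omega
        · have hall2 : ∀ p ∈ U, m p ≤ 2 := by
            intro p hp
            have := hall3 p hp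
            by_contra hc2
            exact h1 ⟨p, hp, by omega⟩
          have hmm : ∑ p ∈ U, m p * (m p - 1) = 10 := by
            have he : ∑ p ∈ U, m p * (m p - 1) = ∑ p ∈ U, 2 * (m p - 1) := by
              apply Finset.sum_congr rfl
              intro p hp
              have h1' := hm1 p hp
              have h2' := hall2 p hp
              interval_cases h : m p <;> simp
            rw [he, ← Finset.mul_sum, hEsum]
            norm_num
          have hNPval : NPc = 10 := by rw [← hsum2, hmm]
          have hPPval : PPc = 10 := by omega
          exact no15 (fun v => (fb c v).card) (fb_sum c)
            (by show ∑ v, (fb c v).card * (fb c v).card = 15; omega)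

lemma union_lb (q : ℕ) (D : Finset (Finset (F × F))) (hc : ∀ s ∈ D, s.card = q)
    (hi : ∀ s ∈ D, ∀ t ∈ D, s ≠ t → (s ∩ t).card ≤ 1) :
    2 * (D.card * q) + D.card ≤ 2 * (D.biUnion id).card + D.card * D.card := by
  classical
  induction D using Finset.induction_on with
  | empty => simp
  | @insert a s ha ih =>
    have hc' : ∀ t ∈ s, t.card = q := fun t ht => hc t (Finset.mem_insert_of_mem ht)
    have hi' : ∀ t ∈ s, ∀ u ∈ s, t ≠ u → (t ∩ u).card ≤ 1 := fun t ht u hu htu =>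
      hi t (Finset.mem_insert_of_mem ht) u (Finset.mem_insert_of_mem hu) htu
    have IH := ih hc' hi'
    have hbu : (insert a s).biUnion id = a ∪ s.biUnion id := Finset.biUnion_insert
    have hcu := Finset.card_union_add_card_inter a (s.biUnion id)
    have hint : (a ∩ s.biUnion id).card ≤ s.card := by
      have heq : a ∩ s.biUnion id = s.biUnion (fun b => a ∩ b) := by
        ext y
        simp only [Finset.mem_inter, Finset.mem_biUnion, id]
        tauto
      rw [heq]
      calc (s.biUnion (fun b => a ∩ b)).card ≤ ∑ b ∈ s, (a ∩ b).card :=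
            Finset.card_biUnion_le
        _ ≤ ∑ _b ∈ s, 1 := Finset.sum_le_sum (fun b hb =>
            hi a (Finset.mem_insert_self a s) b (Finset.mem_insert_of_mem hb)
              (fun h => ha (h ▸ hb)))
        _ = s.card := by simp
    have hca : a.card = q := hc a (Finset.mem_insert_self a s)
    rw [hbu, Finset.card_insert_of_notMem ha]
    set k := s.card with hk
    set B := (s.biUnion id).card with hB
    set U := (a ∪ s.biUnion id).card with hUu
    set I := (a ∩ s.biUnion id).card with hI
    have e1 : (k + 1) * q = k * q + q := by ring
    have e2 : (k + 1) * (k + 1) = k * k + 2 * k + 1 := by ring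
    rw [e1, e2]
    rw [hca] at hcu
    linarith

lemma mainZ (q : ℕ) (hq : Fintype.card F = q) (hq13 : 13 ≤ q)
    (Pq : MvPolynomial (Fin 2) F) (hdeg : Pq.totalDegree ≤ 5)
    (Z : Finset (F × F)) (hZdef : Z = univ.filter (fun p => MvPolynomial.eval ![p.1, p.2] Pq = 0))
    (hZcard : Z.card = 5 * q - 5) : False := by
  classical
  by_cases hcase : ∃ x ∈ Z, ∀ o : Option F, ¬ (lineF x (Dr o) ⊆ Z)
  · obtain ⟨x, hx, hno⟩ := hcase
    exact part2 q hq hq13 Pq hdeg Z hZdef hZcard x hx hno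
  · push_neg at hcase
    set FLS := ((univ : Finset ((F × F) × Option F)).image
      (fun po => lineF po.1 (Dr po.2))).filter (fun s => s ⊆ Z) with hFLS
    have hZun : Z = FLS.biUnion id := by
      ext y
      simp only [Finset.mem_biUnion, id]
      constructor
      · intro hy
        obtain ⟨o, ho⟩ := hcase y hy
        exact ⟨lineF y (Dr o), Finset.mem_filter.2
          ⟨Finset.mem_image.2 ⟨(y, o), mem_univ _, rfl⟩, ho⟩, self_mem_lineF _ _⟩
      · rintro ⟨t, ht, hyt⟩
        exact (Finset.mem_filter.1 ht).2 hyt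
    have hdata : ∀ s ∈ FLS, ∃ p d : F × F, d ≠ 0 ∧ s = lineF p d := by
      intro s hs
      obtain ⟨po, _, rfl⟩ := Finset.mem_image.1 (Finset.mem_filter.1 hs).1
      exact ⟨po.1, Dr po.2, Dr_ne_zero _, rfl⟩
    have hcards : ∀ s ∈ FLS, s.card = q := by
      intro s hs
      obtain ⟨p, d, hd, rfl⟩ := hdata s hs
      rw [card_lineF _ hd, hq]
    have hinter : ∀ s ∈ FLS, ∀ t ∈ FLS, s ≠ t → (s ∩ t).card ≤ 1 := by
      intro s hs t ht hst
      obtain ⟨p, d, hd, rfl⟩ := hdata s hs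
      obtain ⟨p', d', hd', rfl⟩ := hdata t ht
      exact card_inter_le_one hd hd' hst
    rcases lt_or_ge FLS.card 5 with hk | hk
    · have hle : Z.card ≤ ∑ s ∈ FLS, (id s).card := by
        rw [hZun]
        exact Finset.card_biUnion_le
      have hsum : ∑ s ∈ FLS, (id s).card = FLS.card * q := by
        calc ∑ s ∈ FLS, (id s).card = ∑ _s ∈ FLS, q :=
              Finset.sum_congr rfl (fun s hs => by simp only [id]; exact hcards s hs)
          _ = FLS.card * q := by rw [Finset.sum_const, smul_eq_mul]
      rw [hsum] at hle
      have h4 : FLS.card * q ≤ 4 * q := Nat.mul_le_mul_right q (by omega)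
      omega
    rcases lt_or_ge 5 FLS.card with hk6 | hk5
    · obtain ⟨D, hD, hD6⟩ := Finset.exists_subset_card_eq (show 6 ≤ FLS.card by omega)
      have hDu := union_lb q D (fun s hs => hcards s (hD hs))
        (fun s hs t ht => hinter s (hD hs) t (hD ht))
      have hsub : D.biUnion id ⊆ Z := by
        rw [hZun]
        exact Finset.biUnion_subset_biUnion_of_subset_left _ hD
      have hle := Finset.card_le_card hsub
      rw [hD6, hZcard] at *
      omega
    · have hk5' : FLS.card = 5 := le_antisymm hk5 hk
      set e := Finset.equivFinOfCardEq hk5' with he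
      set Ln : Fin 5 → Finset (F × F) := fun i => (e.symm i : { x // x ∈ FLS }).1 with hLndef
      have hLnmem : ∀ i, Ln i ∈ FLS := fun i => (e.symm i).2
      have hinj : Function.Injective Ln := by
        intro i j hij
        have h1 : e.symm i = e.symm j := Subtype.ext hij
        exact e.symm.injective h1
      have hdata' : ∀ i, ∃ p d : F × F, d ≠ 0 ∧ Ln i = lineF p d :=
        fun i => hdata _ (hLnmem i)
      choose ptv dirv hdir hLn using hdata'
      have hUeq : univ.biUnion Ln = FLS.biUnion id := by
        ext y
        simp only [Finset.mem_biUnion, id]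
        constructor
        · rintro ⟨i, _, hy⟩
          exact ⟨Ln i, hLnmem i, hy⟩
        · rintro ⟨t, ht, hyt⟩
          refine ⟨e ⟨t, ht⟩, mem_univ _, ?_⟩
          have : Ln (e ⟨t, ht⟩) = t := by
            rw [hLndef]
            simp
          rw [this]
          exact hyt
      exact part4 q hq hq13 Ln ptv dirv hdir hLn hinj
        (by rw [hUeq, ← hZun]; exact hZcard)

lemma vecEta (z : Fin 2 → F) : ![z 0, z 1] = z := by
  funext i
  fin_cases i <;> simp

lemma hamWt_eq (f : (Fin 2 → F) → F) :
    hamWt f = (univ.filter (fun z => f z ≠ 0)).card := by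
  classical
  rw [hamWt, Set.ncard_eq_toFinset_card']
  congr 1
  ext z
  simp

lemma card_zero_transfer (f : (Fin 2 → F) → F) (Pq : MvPolynomial (Fin 2) F)
    (heval : ∀ x, MvPolynomial.eval x Pq = f x) :
    (univ.filter (fun z : Fin 2 → F => f z = 0)).card
      = (univ.filter (fun p : F × F => MvPolynomial.eval ![p.1, p.2] Pq = 0)).card := by
  classical
  apply Finset.card_nbij' (fun z => (z 0, z 1)) (fun p => ![p.1, p.2])
  · intro z hz
    rw [Finset.mem_coe, Finset.mem_filter] at hz ⊢
    refine ⟨mem_univ _, ?_⟩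
    show MvPolynomial.eval ![z 0, z 1] Pq = 0
    rw [vecEta, heval]
    exact hz.2
  · intro p hp
    rw [Finset.mem_coe, Finset.mem_filter] at hp ⊢
    refine ⟨mem_univ _, ?_⟩
    rw [← heval]
    exact hp.2
  · intro z _
    exact vecEta z
  · intro p _
    simp

lemma gap_arith {q : ℕ} (hq13 : 13 ≤ q) : (q - 4) * (q - 1) + 2 = (q - 3) * (q - 2) := by
  obtain ⟨a, rfl⟩ : ∃ a, q = a + 13 := ⟨q - 13, by omega⟩
  have h1 : a + 13 - 4 = a + 9 := by omega
  have h2 : a + 13 - 1 = a + 12 := by omega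
  have h3 : a + 13 - 3 = a + 10 := by omega
  have h4 : a + 13 - 2 = a + 11 := by omega
  rw [h1, h2, h3, h4]; ring

lemma sq_arith {q : ℕ} (hq13 : 13 ≤ q) :
    q * q = ((q - 4) * (q - 1) + 1) + (5 * q - 5) := by
  obtain ⟨a, rfl⟩ : ∃ a, q = a + 13 := ⟨q - 13, by omega⟩
  have h1 : a + 13 - 4 = a + 9 := by omega
  have h2 : a + 13 - 1 = a + 12 := by omega
  have h3 : 5 * (a + 13) - 5 = 5 * a + 60 := by omega
  rw [h1, h2, h3]; ring

end
end S14

/-- For `q ≥ 13`, the third weight of `R_q(5,2)` (the smallest codeword weight strictly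
greater than the second weight `(q-4)(q-1)`) equals `(q-3)(q-2)`. -/
theorem stmt14 {F : Type*} [Field F] [Fintype F] (q : ℕ) (hq : Fintype.card F = q)
    (hq13 : 13 ≤ q) :
    IsLeast {w : ℕ | ∃ f : (Fin 2 → F) → F,
      (∃ P : MvPolynomial (Fin 2) F, P.totalDegree ≤ 5 ∧
        ∀ x, MvPolynomial.eval x P = f x) ∧
      hamWt f = w ∧ (q - 4) * (q - 1) < w} ((q - 3) * (q - 2)) := by
  classical
  have hgap := S14.gap_arith hq13
  constructor
  · -- membership
    have hnsub : ¬ ((univ : Finset F) ⊆ {0, 1}) := by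
      intro hsub
      have h1 := Finset.card_le_card hsub
      have h2 : ({0, 1} : Finset F).card ≤ 2 := Finset.card_insert_le _ _ |>.trans (by simp)
      rw [Finset.card_univ, hq] at h1
      omega
    obtain ⟨cc, _, hcc⟩ := Finset.not_subset.1 hnsub
    have hcc0 : cc ≠ 0 := fun h => hcc (by rw [h]; simp)
    have hcc1 : cc ≠ 1 := fun h => hcc (by rw [h]; simp)
    set Pm : MvPolynomial (Fin 2) F :=
      (MvPolynomial.X 0 - MvPolynomial.C 0) * (MvPolynomial.X 0 - MvPolynomial.C 1) * (MvPolynomial.X 0 - MvPolynomial.C cc) * ((MvPolynomial.X 1 - MvPolynomial.C 0) * (MvPolynomial.X 1 - MvPolynomial.C 1)) with hPm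
    have hsub1 : ∀ (i : Fin 2) (b : F),
        (MvPolynomial.X i - MvPolynomial.C b : MvPolynomial (Fin 2) F).totalDegree ≤ 1 := by
      intro i b
      have he : (MvPolynomial.X i - MvPolynomial.C b : MvPolynomial (Fin 2) F) = MvPolynomial.X i + MvPolynomial.C (-b) := by
        rw [map_neg, sub_eq_add_neg]
      rw [he]
      refine le_trans (MvPolynomial.totalDegree_add _ _) ?_
      simp [MvPolynomial.totalDegree_X, MvPolynomial.totalDegree_C]
    refine ⟨fun z => MvPolynomial.eval z Pm, ⟨Pm, ?_, fun x => rfl⟩, ?_, ?_⟩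
    · rw [hPm]
      have h1 : ((MvPolynomial.X 0 - MvPolynomial.C 0) * (MvPolynomial.X 0 - MvPolynomial.C 1) : MvPolynomial (Fin 2) F).totalDegree ≤ 2 :=
        le_trans (MvPolynomial.totalDegree_mul _ _) (add_le_add (hsub1 0 0) (hsub1 0 1))
      have h2 : ((MvPolynomial.X 0 - MvPolynomial.C 0) * (MvPolynomial.X 0 - MvPolynomial.C 1) * (MvPolynomial.X 0 - MvPolynomial.C cc) :
          MvPolynomial (Fin 2) F).totalDegree ≤ 3 :=
        le_trans (MvPolynomial.totalDegree_mul _ _) (add_le_add h1 (hsub1 0 cc))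
      have h3 : ((MvPolynomial.X 1 - MvPolynomial.C 0) * (MvPolynomial.X 1 - MvPolynomial.C 1) : MvPolynomial (Fin 2) F).totalDegree ≤ 2 :=
        le_trans (MvPolynomial.totalDegree_mul _ _) (add_le_add (hsub1 1 0) (hsub1 1 1))
      exact le_trans (MvPolynomial.totalDegree_mul _ _)
        (le_trans (add_le_add h2 h3) (by norm_num))
    · rw [S14.hamWt_eq]
      have hfv : ∀ z : Fin 2 → F, MvPolynomial.eval z Pm ≠ 0 ↔
          ((z 0 ≠ 0 ∧ z 0 ≠ 1 ∧ z 0 ≠ cc) ∧ (z 1 ≠ 0 ∧ z 1 ≠ 1)) := by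
        intro z
        rw [hPm]
        simp only [map_mul, map_sub, MvPolynomial.eval_X, MvPolynomial.eval_C]
        simp only [ne_eq, mul_eq_zero, sub_eq_zero, not_or, sub_zero]
        tauto
      set A := univ.filter (fun x : F => x ≠ 0 ∧ x ≠ 1 ∧ x ≠ cc) with hA
      set B := univ.filter (fun y : F => y ≠ 0 ∧ y ≠ 1) with hB
      have hbij : (univ.filter (fun z : Fin 2 → F => MvPolynomial.eval z Pm ≠ 0)).card
          = (A ×ˢ B).card := by
        apply Finset.card_nbij' (fun z => (z 0, z 1)) (fun p => ![p.1, p.2])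
        · intro z hz
          rw [Finset.mem_coe, Finset.mem_filter] at hz
          have h := (hfv z).1 hz.2
          rw [Finset.mem_coe, Finset.mem_product, hA, hB, Finset.mem_filter, Finset.mem_filter]
          exact ⟨⟨mem_univ _, h.1⟩, mem_univ _, h.2⟩
        · intro p hp
          rw [Finset.mem_coe, Finset.mem_product, hA, hB, Finset.mem_filter, Finset.mem_filter] at hp
          rw [Finset.mem_coe, Finset.mem_filter]
          refine ⟨mem_univ _, (hfv _).2 ?_⟩
          exact ⟨hp.1.2, hp.2.2⟩
        · intro z _
          exact S14.vecEta z
        · intro p _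
          simp
      rw [hbij, Finset.card_product]
      have hAcard : A.card = q - 3 := by
        have hAe : A = univ \ {0, 1, cc} := by
          ext x
          simp only [hA, Finset.mem_filter, Finset.mem_sdiff, Finset.mem_univ, true_and,
            Finset.mem_insert, Finset.mem_singleton]
          tauto
        rw [hAe, Finset.card_sdiff_of_subset (Finset.subset_univ _), Finset.card_univ, hq]
        have h3 : ({0, 1, cc} : Finset F).card = 3 := by
          rw [Finset.card_insert_of_notMem (by
              simp only [Finset.mem_insert, Finset.mem_singleton]
              push_neg
              exact ⟨fun h => (zero_ne_one h), fun h => hcc0 h.symm⟩),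
            Finset.card_insert_of_notMem (by
              simp only [Finset.mem_singleton]
              exact fun h => hcc1 h.symm),
            Finset.card_singleton]
        rw [h3]
      have hBcard : B.card = q - 2 := by
        have hBe : B = univ \ {0, 1} := by
          ext x
          simp only [hB, Finset.mem_filter, Finset.mem_sdiff, Finset.mem_univ, true_and,
            Finset.mem_insert, Finset.mem_singleton]
          tauto
        rw [hBe, Finset.card_sdiff_of_subset (Finset.subset_univ _), Finset.card_univ, hq]
        have h2 : ({0, 1} : Finset F).card = 2 := by
          rw [Finset.card_insert_of_notMem (by
              simp only [Finset.mem_singleton]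
              exact fun h => zero_ne_one h), Finset.card_singleton]
        rw [h2]
      rw [hAcard, hBcard]
    · omega
  · -- lower bound
    rintro w ⟨f, ⟨Pq, hdeg, heval⟩, hwt, hgt⟩
    by_contra hlt
    push_neg at hlt
    have hw : w = (q - 4) * (q - 1) + 1 := by omega
    have hcardsplit := Finset.card_filter_add_card_filter_not
      (s := (univ : Finset (Fin 2 → F))) (p := fun z => f z = 0)
    have h1 : (univ.filter (fun z : Fin 2 → F => ¬ f z = 0)).card = w := by
      rw [← hwt, S14.hamWt_eq]
    have huniv : (univ : Finset (Fin 2 → F)).card = q * q := by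
      rw [Finset.card_univ, Fintype.card_fun, hq]
      simp [Fintype.card_fin]
      ring
    have hsq := S14.sq_arith hq13
    have hZf : (univ.filter (fun z : Fin 2 → F => f z = 0)).card = 5 * q - 5 := by
      omega
    exact S14.mainZ q hq hq13 Pq hdeg _ rfl
      (by rw [← S14.card_zero_transfer f Pq heval]; exact hZf)
end

section
/- Let q ≥ 7 be a prime power, m ≥ 2, and let P be a point of 𝔽_q² and f : 𝔽_q² → 𝔽_q with deg(f) = b where 6 ≤ b < (q+4)/3, |f| ≤ (q−b+2)(q−2), and f(P) = 0. Then there is an affine line L through P that does not meet the support of f. -/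
open Polynomial in
lemma natDegree_eval₂_aux {F : Type*} [CommRing F] (p : MvPolynomial (Fin 2) F)
    (g : Fin 2 → Polynomial F) (hg : ∀ i, (g i).natDegree ≤ 1) :
    (MvPolynomial.eval₂ Polynomial.C g p).natDegree ≤ p.totalDegree := by
  rw [MvPolynomial.eval₂_eq]
  apply natDegree_sum_le_of_forall_le
  intro d hd
  calc (C (MvPolynomial.coeff d p) * ∏ i ∈ d.support, g i ^ d i).natDegree
      ≤ (C (MvPolynomial.coeff d p)).natDegree + (∏ i ∈ d.support, g i ^ d i).natDegree :=
        natDegree_mul_le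
    _ ≤ 0 + ∑ i ∈ d.support, (g i ^ d i).natDegree := by
        gcongr
        · exact le_of_eq (natDegree_C _)
        · exact natDegree_prod_le _ _
    _ ≤ ∑ i ∈ d.support, d i * 1 := by
        rw [zero_add]
        apply Finset.sum_le_sum
        intro i _
        exact natDegree_pow_le.trans (by gcongr; exact hg i)
    _ = d.sum fun _ e => e := by simp [Finsupp.sum]
    _ ≤ p.totalDegree := MvPolynomial.le_totalDegree hd

theorem stmt16 {F : Type*} [Field F] [Fintype F] (q : ℕ) (hq : Fintype.card F = q)
    (hq7 : 7 ≤ q) (m : ℕ) (hm : 2 ≤ m) (b : ℕ) (hb6 : 6 ≤ b) (hb : 3 * b < q + 4)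
    (f : (Fin 2 → F) → F)
    -- deg(f) = b : degree at most b but not at most b-1
    (hdeg : (∃ P : MvPolynomial (Fin 2) F, P.totalDegree ≤ b ∧
        ∀ x, MvPolynomial.eval x P = f x) ∧
      ¬ (∃ P : MvPolynomial (Fin 2) F, P.totalDegree ≤ b - 1 ∧
        ∀ x, MvPolynomial.eval x P = f x))
    (hw : hamWt f ≤ (q - b + 2) * (q - 2))
    (P : Fin 2 → F) (hP : f P = 0) :
    -- there is an affine line through P avoiding the support of f
    ∃ dv : Fin 2 → F, dv ≠ 0 ∧ ∀ t : F, f (P + t • dv) = 0 := by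
  classical
  by_contra hcon
  push_neg at hcon
  obtain ⟨⟨p0, hp0deg, hp0⟩, -⟩ := hdeg
  -- directions
  set dir : Option F → (Fin 2 → F) := fun o => o.elim ![0, 1] (fun a => ![1, a]) with hdirdef
  have hdir0 : ∀ o, dir o ≠ 0 := by
    rintro (_ | a) h
    · exact one_ne_zero (congrFun h 1)
    · exact one_ne_zero (congrFun h 0)
  -- restricted polynomial facts
  have heval : ∀ (dv : Fin 2 → F) (t : F),
      (MvPolynomial.eval₂ Polynomial.C (fun i => Polynomial.C (P i) + Polynomial.X * Polynomial.C (dv i)) p0).eval t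
        = f (P + t • dv) := by
    intro dv t
    have := MvPolynomial.eval₂_comp_left (Polynomial.evalRingHom t) Polynomial.C
      (fun i => Polynomial.C (P i) + Polynomial.X * Polynomial.C (dv i)) p0
    simp only [Polynomial.coe_evalRingHom] at this
    rw [this, ← hp0]
    have h1 : (Polynomial.evalRingHom t).comp Polynomial.C = RingHom.id F := by
      ext a; simp
    have h2 : (Polynomial.eval t ∘ fun i => Polynomial.C (P i) + Polynomial.X * Polynomial.C (dv i))
        = (P + t • dv) := by
      funext i
      simp only [Function.comp_apply, Polynomial.eval_add, Polynomial.eval_mul,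
        Polynomial.eval_C, Polynomial.eval_X, Pi.add_apply, Pi.smul_apply, smul_eq_mul]
    rw [h1, h2, MvPolynomial.eval]
    rfl
  set h : (Fin 2 → F) → Polynomial F := fun dv =>
    MvPolynomial.eval₂ Polynomial.C
      (fun i => Polynomial.C (P i) + Polynomial.X * Polynomial.C (dv i)) p0 with hh
  have hdegh : ∀ dv, (h dv).natDegree ≤ b := fun dv =>
    le_trans (natDegree_eval₂_aux _ _ (fun i => by compute_degree)) hp0deg
  have hne : ∀ o, h (dir o) ≠ 0 := by
    intro o
    obtain ⟨t, ht⟩ := hcon (dir o) (hdir0 o)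
    intro h0
    refine ht ?_
    rw [← heval (dir o) t]
    show Polynomial.eval t (h (dir o)) = 0
    rw [h0, Polynomial.eval_zero]
  let Z : Option F → Finset F := fun o => Finset.univ.filter (fun t : F => f (P + t • dir o) ≠ 0)
  have hZcard : ∀ o, q - b ≤ (Z o).card := by
    intro o
    have hsub : Finset.univ.filter (fun t : F => f (P + t • dir o) = 0) ⊆
        (h (dir o)).roots.toFinset := by
      intro t ht
      simp only [Finset.mem_filter] at ht
      rw [Multiset.mem_toFinset, Polynomial.mem_roots (hne o)]
      exact (heval (dir o) t).trans ht.2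
    have h1 : (Finset.univ.filter (fun t : F => f (P + t • dir o) = 0)).card ≤ b :=
      le_trans (Finset.card_le_card hsub)
        (le_trans (Multiset.toFinset_card_le _)
          (le_trans (Polynomial.card_roots' _) (hdegh _)))
    have h2 : (Finset.univ.filter (fun t : F => f (P + t • dir o) = 0)).card + (Z o).card = q := by
      rw [← hq, ← Finset.card_univ (α := F)]
      exact Finset.card_filter_add_card_filter_not _
    omega
  have hinj : ∀ o, Function.Injective (fun t : F => P + t • dir o) := by
    intro o t1 t2 hte
    exact smul_left_injective F (hdir0 o) (add_left_cancel hte)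
  let T : Option F → Finset (Fin 2 → F) := fun o => (Z o).image (fun t => P + t • dir o)
  have hTcard : ∀ o, (T o).card = (Z o).card := fun o =>
    Finset.card_image_of_injective _ (hinj o)
  have hTsub : ∀ o, T o ⊆ Finset.univ.filter (fun x => f x ≠ 0) := by
    intro o x hx
    simp only [T, Z, Finset.mem_image, Finset.mem_filter, Finset.mem_univ, true_and] at hx ⊢
    obtain ⟨t, ht, rfl⟩ := hx
    exact ht
  have hdisj : ∀ o1 o2 : Option F, o1 ≠ o2 → Disjoint (T o1) (T o2) := by
    intro o1 o2 hne12
    rw [Finset.disjoint_left]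
    intro x hx1 hx2
    simp only [T, Z, Finset.mem_image, Finset.mem_filter, Finset.mem_univ, true_and] at hx1 hx2
    obtain ⟨t1, ht1, hx1e⟩ := hx1
    obtain ⟨t2, ht2, hx2e⟩ := hx2
    have ht1ne : t1 ≠ 0 := by
      rintro rfl
      rw [zero_smul, add_zero] at ht1
      exact ht1 hP
    have ht2ne : t2 ≠ 0 := by
      rintro rfl
      rw [zero_smul, add_zero] at ht2
      exact ht2 hP
    have hts : t1 • dir o1 = t2 • dir o2 := add_left_cancel (hx1e.trans hx2e.symm)
    have hts0 := congrFun hts 0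
    have hts1 := congrFun hts 1
    simp only [Pi.smul_apply, smul_eq_mul] at hts0 hts1
    match o1, o2 with
    | some a1, some a2 =>
      simp only [hdirdef, Option.elim, Matrix.cons_val_zero, Matrix.cons_val_one,
        Matrix.head_cons, mul_one] at hts0 hts1
      apply hne12
      rw [hts0] at hts1
      rw [mul_left_cancel₀ ht2ne hts1]
    | some a1, none =>
      simp only [hdirdef, Option.elim, Matrix.cons_val_zero, mul_one, mul_zero] at hts0
      exact ht1ne hts0
    | none, some a2 =>
      simp only [hdirdef, Option.elim, Matrix.cons_val_zero, mul_one, mul_zero] at hts0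
      exact ht2ne hts0.symm
    | none, none => exact hne12 rfl
  have hcount : (q + 1) * (q - b) ≤ (Finset.univ.filter (fun x => f x ≠ 0)).card := by
    have hb1 := Finset.card_biUnion (s := (Finset.univ : Finset (Option F))) (t := T)
      (fun x _ y _ hxy => hdisj x y hxy)
    have hsub : (Finset.univ.biUnion T) ⊆ Finset.univ.filter (fun x => f x ≠ 0) := by
      intro x hx
      rw [Finset.mem_biUnion] at hx
      obtain ⟨o, _, hx⟩ := hx
      exact hTsub o hx
    calc (q + 1) * (q - b) = ∑ _o : Option F, (q - b) := by
          rw [Finset.sum_const, Finset.card_univ, Fintype.card_option, hq, smul_eq_mul]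
      _ ≤ ∑ o : Option F, (T o).card :=
          Finset.sum_le_sum fun o _ => (hTcard o) ▸ hZcard o
      _ = (Finset.univ.biUnion T).card := hb1.symm
      _ ≤ _ := Finset.card_le_card hsub
  have hham : hamWt f = (Finset.univ.filter (fun x => f x ≠ 0)).card := by
    rw [hamWt, ← Set.ncard_coe_finset]
    congr 1
    ext x
    simp
  rw [hham] at hw
  have hbq : b ≤ q := by omega
  have key : (q + 1) * (q - b) ≤ (q - b + 2) * (q - 2) := le_trans hcount hw
  have keyz : ((q : ℤ) + 1) * ((q : ℤ) - b) ≤ ((q : ℤ) - b + 2) * ((q : ℤ) - 2) := by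
    have := key
    zify [hbq, (show 2 ≤ q by omega)] at this
    linarith
  have h6 : (6 : ℤ) ≤ (b : ℤ) := by exact_mod_cast hb6
  have h3b : 3 * (b : ℤ) < (q : ℤ) + 4 := by exact_mod_cast hb
  nlinarith [keyz, h6, h3b]
end
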